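/- arXiv:1703.06556 — 5 statements merged into one kernel-verified Lean document; each statement's English description precedes it below -/
import Mathlib

section
/- Let G be a finite simple connected graph with independence number α(G) = 2 that contains no induced cycle C₅ on five vertices. Then for every non-simplicial vertex v of G there exists a vertex u adjacent to v such that the pair {v, u} is a dominating set of G, i.e., every vertex of G is equal to or adjacent to v or u. -/
/-- A set of vertices is independent if its vertices are pairwise nonadjacent. -/
def SimpleGraph.IsIndepSet' {V : Type*} (G : SimpleGraph V) (s : Finset V) : Prop :=
  ∀ a ∈ s, ∀ b ∈ s, a ≠ b → ¬ G.Adj a b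

/-- The independence number of `G`: the largest cardinality of an independent set. -/
noncomputable def SimpleGraph.indepNum' {V : Type*} (G : SimpleGraph V) : ℕ :=
  sSup {n | ∃ s : Finset V, G.IsIndepSet' s ∧ s.card = n}

/-- `G` contains an induced (chordless) cycle on `n` vertices. -/
def SimpleGraph.HasInducedCycle {V : Type*} (G : SimpleGraph V) (n : ℕ) : Prop :=
  ∃ f : ZMod n → V, Function.Injective f ∧
    ∀ i j : ZMod n, G.Adj (f i) (f j) ↔ (j = i + 1 ∨ i = j + 1)

/-- A vertex is simplicial if its neighbourhood induces a complete subgraph. -/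
def SimpleGraph.IsSimplicial {V : Type*} (G : SimpleGraph V) (v : V) : Prop :=
  ∀ a ∈ G.neighborSet v, ∀ b ∈ G.neighborSet v, a ≠ b → G.Adj a b

/-- A graph is claw-free if no vertex has three pairwise nonadjacent neighbors. -/
def SimpleGraph.ClawFree {V : Type*} (G : SimpleGraph V) : Prop :=
  ¬ ∃ c x y z : V, x ≠ y ∧ x ≠ z ∧ y ≠ z ∧
    G.Adj c x ∧ G.Adj c y ∧ G.Adj c z ∧ ¬ G.Adj x y ∧ ¬ G.Adj x z ∧ ¬ G.Adj y z

lemma no_indep3 {V : Type*} [Fintype V] [DecidableEq V] (G : SimpleGraph V)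
    (hα : G.indepNum' = 2) (p q r : V) (hpq : p ≠ q) (hpr : p ≠ r) (hqr : q ≠ r)
    (apq : ¬ G.Adj p q) (apr : ¬ G.Adj p r) (aqr : ¬ G.Adj q r) : False := by
  have hind : G.IsIndepSet' {p, q, r} := by
    intro a ha b hb hab
    simp only [Finset.mem_insert, Finset.mem_singleton] at ha hb
    rcases ha with rfl | rfl | rfl <;> rcases hb with rfl | rfl | rfl <;>
      first
        | exact absurd rfl hab
        | assumption
        | exact fun h => apq h.symm
        | exact fun h => apr h.symm
        | exact fun h => aqr h.symm
  have hcard : ({p, q, r} : Finset V).card = 3 := by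
    rw [Finset.card_insert_of_notMem (by simp [hpq, hpr]),
        Finset.card_insert_of_notMem (by simp [hqr])]
    simp
  have h3 : 3 ≤ G.indepNum' := by
    apply le_csSup
    · exact ⟨Fintype.card V, fun n ⟨s, _, hc⟩ => hc ▸ s.card_le_univ⟩
    · exact ⟨_, hind, hcard⟩
  omega

/-- **Theorem 1.** If `G` is a finite simple connected graph with independence number 2 and
no induced `C₅`, then every non-simplicial vertex `v` lies on a dominating edge `vu`. -/
theorem stmt_0 {V : Type*} [Fintype V] (G : SimpleGraph V)
    (hconn : G.Connected) (hα : G.indepNum' = 2) (hC5 : ¬ G.HasInducedCycle 5)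
    (v : V) (hv : ¬ G.IsSimplicial v) :
    ∃ u : V, G.Adj v u ∧ ∀ w : V, w = v ∨ w = u ∨ G.Adj w v ∨ G.Adj w u := by
  classical
  simp only [SimpleGraph.IsSimplicial, SimpleGraph.mem_neighborSet, not_forall] at hv
  obtain ⟨a, hva, b, hvb, hab, hnab⟩ := hv
  by_cases ha : ∀ w : V, w = v ∨ w = a ∨ G.Adj w v ∨ G.Adj w a
  · exact ⟨a, hva, ha⟩
  by_cases hb : ∀ w : V, w = v ∨ w = b ∨ G.Adj w v ∨ G.Adj w b
  · exact ⟨b, hvb, hb⟩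
  push_neg at ha hb
  obtain ⟨x, hxv, hxa, hxnv, hxna⟩ := ha
  obtain ⟨y, hyv, hyb, hynv, hynb⟩ := hb
  have hxb' : x ≠ b := fun h => hxnv (h ▸ hvb.symm)
  have hxb : G.Adj x b := by
    by_contra h
    exact no_indep3 G hα x a b hxa hxb' hab hxna h hnab
  have hya' : y ≠ a := fun h => hynv (h ▸ hva.symm)
  have hya : G.Adj y a := by
    by_contra h
    exact no_indep3 G hα y a b hya' hyb hab h hynb hnab
  have hxy' : x ≠ y := fun h => hynb (h ▸ hxb)
  have hxy : G.Adj x y := by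
    by_contra h
    exact no_indep3 G hα v x y hxv.symm hyv.symm hxy'
      (fun h' => hxnv h'.symm) (fun h' => hynv h'.symm) h
  exfalso
  apply hC5
  have d1 : v ≠ a := hva.ne
  have d2 : v ≠ b := hvb.ne
  have d3 : v ≠ x := hxv.symm
  have d4 : v ≠ y := hyv.symm
  have d5 : a ≠ y := hya.ne'
  have d6 : a ≠ x := hxa.symm
  have d7 : b ≠ x := hxb.ne'
  have d8 : b ≠ y := hyb.symm
  have e1 : G.Adj a v := hva.symm
  have e2 : G.Adj b v := hvb.symm
  have e3 : G.Adj a y := hya.symm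
  have e4 : G.Adj y x := hxy.symm
  have e5 : G.Adj b x := hxb.symm
  have n1 : ¬ G.Adj b a := fun h => hnab h.symm
  have n2 : ¬ G.Adj v x := fun h => hxnv h.symm
  have n3 : ¬ G.Adj v y := fun h => hynv h.symm
  have n4 : ¬ G.Adj a x := fun h => hxna h.symm
  have n5 : ¬ G.Adj b y := fun h => hynb h.symm
  have hcases : ∀ i : ZMod 5, i = 0 ∨ i = 1 ∨ i = 2 ∨ i = 3 ∨ i = 4 := by decide
  refine ⟨fun i => if i = 0 then v else if i = 1 then a else if i = 2 then y
    else if i = 3 then x else b, ?_, ?_⟩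
  · intro i j h
    rcases hcases i with rfl | rfl | rfl | rfl | rfl <;>
      rcases hcases j with rfl | rfl | rfl | rfl | rfl <;>
      simp_all (config := {decide := true})
  · intro i j
    rcases hcases i with rfl | rfl | rfl | rfl | rfl <;>
      rcases hcases j with rfl | rfl | rfl | rfl | rfl <;>
      simp_all (config := {decide := true})
end

section
/- Let G be a finite simple graph on n vertices with independence number α(G) = 2 that contains no induced cycle C₅ on five vertices. Then there exist pairwise disjoint nonempty vertex subsets B₁, …, B_k with k ≥ n/2 such that each B_i induces a connected subgraph of G and for every pair i ≠ j there is an edge of G joining a vertex of B_i to a vertex of B_j. -/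
set_option maxRecDepth 10000

section Aux

variable {V : Type*}

lemma aux_single_conn (G : SimpleGraph V) (x : V) : (G.induce {x}).Connected := by
  have : Nonempty ({x} : Set V) := ⟨⟨x, rfl⟩⟩
  refine ⟨fun a b => ?_⟩
  have : a = b := by
    rcases a with ⟨a, ha⟩; rcases b with ⟨b, hb⟩
    simp only [Set.mem_singleton_iff] at ha hb
    exact Subtype.ext (ha.trans hb.symm)
  exact this ▸ SimpleGraph.Reachable.refl _

lemma aux_pair_conn (G : SimpleGraph V) {a b : V} (hab : G.Adj a b) :
    (G.induce {a, b}).Connected := by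
  have : Nonempty ({a, b} : Set V) := ⟨⟨a, by simp⟩⟩
  refine ⟨fun u v => ?_⟩
  have key : ∀ c : ({a, b} : Set V), (G.induce {a, b}).Reachable ⟨a, by simp⟩ c := by
    rintro ⟨c, hc⟩
    rcases hc with rfl | rfl
    · rfl
    · exact SimpleGraph.Adj.reachable (by simp [SimpleGraph.comap_adj, hab])
  exact (key u).symm.trans (key v)

lemma aux_hasC5 (G : SimpleGraph V) {r u b a v : V}
    (hru : G.Adj r u) (hub : G.Adj u b) (hba : G.Adj b a) (hav : G.Adj a v)
    (hvr : G.Adj v r)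
    (nrb : ¬ G.Adj r b) (nra : ¬ G.Adj r a) (nua : ¬ G.Adj u a)
    (nuv : ¬ G.Adj u v) (nbv : ¬ G.Adj b v) :
    G.HasInducedCycle 5 := by
  classical
  have hur := hru.symm; have hbu := hub.symm; have hab := hba.symm
  have hva := hav.symm; have hrv := hvr.symm
  have nbr : ¬ G.Adj b r := fun h => nrb h.symm
  have nar : ¬ G.Adj a r := fun h => nra h.symm
  have nau : ¬ G.Adj a u := fun h => nua h.symm
  have nvu : ¬ G.Adj v u := fun h => nuv h.symm
  have nvb : ¬ G.Adj v b := fun h => nbv h.symm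
  have dru : r ≠ u := hru.ne
  have dub : u ≠ b := hub.ne
  have dba : b ≠ a := hba.ne
  have dav : a ≠ v := hav.ne
  have dvr : v ≠ r := hvr.ne
  have drb : r ≠ b := fun h => nbv (h ▸ hrv)
  have dra : r ≠ a := fun h => nau (h ▸ hru)
  have dua : u ≠ a := fun h => nuv (h.symm ▸ hav)
  have duv : u ≠ v := fun h => nvb (h ▸ hub)
  have dbv : b ≠ v := fun h => nuv (h ▸ hub)
  refine ⟨fun i => if i = 0 then r else if i = 1 then u else if i = 2 then b
    else if i = 3 then a else v, ?_, ?_⟩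
  all_goals have all5 : ∀ i : ZMod 5, i = 0 ∨ i = 1 ∨ i = 2 ∨ i = 3 ∨ i = 4 := by decide
  · intro i j hij
    have hi := all5 i
    have hj := all5 j
    clear all5
    rcases hi with rfl|rfl|rfl|rfl|rfl <;> rcases hj with rfl|rfl|rfl|rfl|rfl <;>
      simp_all (config := { decide := true })
  · intro i j
    have hi := all5 i
    have hj := all5 j
    clear all5
    rcases hi with rfl|rfl|rfl|rfl|rfl <;> rcases hj with rfl|rfl|rfl|rfl|rfl <;>
      simp_all (config := { decide := true }) [SimpleGraph.irrefl]

lemma aux_indep3 [Fintype V] (G : SimpleGraph V) (hα : G.indepNum' = 2)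
    {x y z : V} (hxy : x ≠ y) (hxz : x ≠ z) (hyz : y ≠ z)
    (h1 : ¬ G.Adj x y) (h2 : ¬ G.Adj x z) (h3 : ¬ G.Adj y z) : False := by
  classical
  set s : Finset V := {x, y, z} with hs
  have hcard : s.card = 3 := by
    rw [hs]
    rw [Finset.card_insert_of_notMem (by simp [hxy, hxz]),
        Finset.card_insert_of_notMem (by simp [hyz]), Finset.card_singleton]
  have hindep : G.IsIndepSet' s := by
    intro a ha b hb hab
    simp only [hs, Finset.mem_insert, Finset.mem_singleton] at ha hb
    rcases ha with rfl|rfl|rfl <;> rcases hb with rfl|rfl|rfl <;>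
      first
        | exact absurd rfl hab
        | assumption
        | exact fun h => h1 h.symm
        | exact fun h => h2 h.symm
        | exact fun h => h3 h.symm
  have hbdd : BddAbove {n | ∃ s : Finset V, G.IsIndepSet' s ∧ s.card = n} := by
    refine ⟨Fintype.card V, ?_⟩
    rintro n ⟨t, _, rfl⟩
    exact t.card_le_univ
  have h3le : 3 ≤ G.indepNum' := le_csSup hbdd ⟨s, hindep, hcard⟩
  omega

lemma aux_main (G : SimpleGraph V)
    (hind : ∀ x y z : V, x ≠ y → x ≠ z → y ≠ z →
      ¬ G.Adj x y → ¬ G.Adj x z → ¬ G.Adj y z → False)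
    (hC5 : ¬ G.HasInducedCycle 5) (s : Finset V) :
    ∃ (k : ℕ) (B : Fin k → Set V),
      (∀ i, (B i).Nonempty) ∧
      (∀ i, B i ⊆ ↑s) ∧
      (∀ i j, i ≠ j → Disjoint (B i) (B j)) ∧
      (∀ i, (G.induce (B i)).Connected) ∧
      (∀ i j, i ≠ j → ∃ a ∈ B i, ∃ b ∈ B j, G.Adj a b) ∧
      (s.card : ℝ) / 2 ≤ (k : ℝ) := by
  classical
  induction s using Finset.strongInduction with
  | _ s ih =>
  by_cases hcase : ∃ a ∈ s, ∃ b ∈ s, G.Adj a b ∧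
      ∀ x ∈ s, x ≠ a → x ≠ b → (G.Adj x a ∨ G.Adj x b)
  · -- case a : dominating edge
    obtain ⟨a, ha, b, hb, hab, hdom⟩ := hcase
    set t : Finset V := (s.erase a).erase b with htdef
    have htss : t ⊂ s :=
      Finset.ssubset_of_subset_of_ssubset (Finset.erase_subset _ _)
        (Finset.erase_ssubset ha)
    obtain ⟨k', B', hne', hsub', hdisj', hconn', hcross', hcnt'⟩ := ih t htss
    have hmemt : ∀ x ∈ t, x ∈ s ∧ x ≠ a ∧ x ≠ b := by
      intro x hx
      simp only [htdef, Finset.mem_erase] at hx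
      exact ⟨hx.2.2, hx.2.1, hx.1⟩
    refine ⟨k' + 1, Fin.cons {a, b} B', ?_, ?_, ?_, ?_, ?_, ?_⟩
    · intro i
      refine Fin.cases ?_ ?_ i
      · exact ⟨a, by simp⟩
      · intro j; simpa using hne' j
    · intro i
      refine Fin.cases ?_ ?_ i
      · simp only [Fin.cons_zero]
        rintro x (rfl | rfl)
        · exact ha
        · exact hb
      · intro j
        simp only [Fin.cons_succ]
        exact fun x hx => Finset.coe_subset.mpr htss.subset (hsub' j hx)
    · intro i j hij
      rcases Fin.eq_zero_or_eq_succ i with rfl | ⟨i', rfl⟩ <;>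
        rcases Fin.eq_zero_or_eq_succ j with rfl | ⟨j', rfl⟩
      · exact absurd rfl hij
      · simp only [Fin.cons_zero, Fin.cons_succ]
        rw [Set.disjoint_left]
        rintro x (rfl | rfl) hx
        · exact (hmemt x (hsub' j' hx)).2.1 rfl
        · exact (hmemt x (hsub' j' hx)).2.2 rfl
      · simp only [Fin.cons_zero, Fin.cons_succ]
        rw [Set.disjoint_right]
        rintro x (rfl | rfl) hx
        · exact (hmemt x (hsub' i' hx)).2.1 rfl
        · exact (hmemt x (hsub' i' hx)).2.2 rfl
      · simp only [Fin.cons_succ]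
        exact hdisj' i' j' (fun h => hij (congrArg Fin.succ h))
    · intro i
      refine Fin.cases ?_ ?_ i
      · exact aux_pair_conn G hab
      · intro j; exact hconn' j
    · intro i j hij
      rcases Fin.eq_zero_or_eq_succ i with rfl | ⟨i', rfl⟩ <;>
        rcases Fin.eq_zero_or_eq_succ j with rfl | ⟨j', rfl⟩
      · exact absurd rfl hij
      · obtain ⟨x, hx⟩ := hne' j'
        obtain ⟨hxs, hxa, hxb⟩ := hmemt x (hsub' j' hx)
        rcases hdom x hxs hxa hxb with h | h
        · exact ⟨a, by simp, x, by simpa using hx, h.symm⟩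
        · exact ⟨b, by simp, x, by simpa using hx, h.symm⟩
      · obtain ⟨x, hx⟩ := hne' i'
        obtain ⟨hxs, hxa, hxb⟩ := hmemt x (hsub' i' hx)
        rcases hdom x hxs hxa hxb with h | h
        · exact ⟨x, by simpa using hx, a, by simp, h⟩
        · exact ⟨x, by simpa using hx, b, by simp, h⟩
      · obtain ⟨x, hx, y, hy, hxy⟩ := hcross' i' j' (fun h => hij (congrArg Fin.succ h))
        exact ⟨x, by simpa using hx, y, by simpa using hy, hxy⟩
    · have hbt : b ∈ s.erase a := Finset.mem_erase.mpr ⟨hab.ne', hb⟩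
      have hc1 : (s.erase a).card = s.card - 1 := Finset.card_erase_of_mem ha
      have hc2 : t.card = (s.erase a).card - 1 := Finset.card_erase_of_mem hbt
      have hcard2 : 2 ≤ s.card := Finset.one_lt_card.mpr ⟨a, ha, b, hb, hab.ne⟩
      have heq : t.card + 2 = s.card := by omega
      have heqR : (t.card : ℝ) + 2 = (s.card : ℝ) := by exact_mod_cast congrArg (Nat.cast : ℕ → ℝ) heq
      push_cast
      linarith
  · -- case b : no dominating edge
    push_neg at hcase
    rcases s.eq_empty_or_nonempty with rfl | ⟨r, hr⟩
    · refine ⟨0, Fin.elim0, fun i => i.elim0, fun i => i.elim0, fun i => i.elim0,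
        fun i => i.elim0, fun i => i.elim0, by norm_num⟩
    · set P1 : Finset V := s.filter (fun v => v ≠ r ∧ ¬ G.Adj r v) with hP1def
      set P2 : Finset V := s.filter (fun v => ¬(v ≠ r ∧ ¬ G.Adj r v)) with hP2def
      have hsplit : P1.card + P2.card = s.card :=
        Finset.card_filter_add_card_filter_not _
      have hmem1 : ∀ v ∈ P1, v ∈ s ∧ v ≠ r ∧ ¬ G.Adj r v := by
        intro v hv; simpa [hP1def] using (Finset.mem_filter.mp hv)
      have hmem2 : ∀ v ∈ P2, v ∈ s ∧ (v = r ∨ G.Adj r v) := by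
        intro v hv
        have := Finset.mem_filter.mp hv
        refine ⟨this.1, ?_⟩
        by_cases h : v = r
        · exact Or.inl h
        · exact Or.inr (by_contra fun h' => this.2 ⟨h, h'⟩)
      have hclique1 : ∀ u ∈ P1, ∀ w ∈ P1, u ≠ w → G.Adj u w := by
        intro u hu w hw huw
        obtain ⟨hus, hur, hnru⟩ := hmem1 u hu
        obtain ⟨hws, hwr, hnrw⟩ := hmem1 w hw
        by_contra hnuw
        exact hind r u w (Ne.symm hur) (Ne.symm hwr) huw hnru hnrw hnuw
      have hclique2 : ∀ u ∈ P2, ∀ w ∈ P2, u ≠ w → G.Adj u w := by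
        intro u hu w hw huw
        by_contra hnuw
        obtain ⟨hus, hu'⟩ := hmem2 u hu
        obtain ⟨hws, hw'⟩ := hmem2 w hw
        rcases hu' with rfl | hadjru
        · rcases hw' with rfl | hadjrw
          · exact huw rfl
          · exact hnuw hadjrw
        · rcases hw' with rfl | hadjrw
          · exact hnuw hadjru.symm
          · -- the C5 construction
            obtain ⟨x, hxs, hxr, hxu, hnxr, hnxu⟩ := hcase r hr u hus hadjru
            obtain ⟨y, hys, hyr, hyw, hnyr, hnyw⟩ := hcase r hr w hws hadjrw
            have hnrx : ¬ G.Adj r x := fun h => hnxr h.symm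
            have hnry : ¬ G.Adj r y := fun h => hnyr h.symm
            have hxw : x ≠ w := fun h => hnrx (h ▸ hadjrw)
            have hyu : y ≠ u := fun h => hnry (h ▸ hadjru)
            have hxy : x ≠ y := by
              rintro rfl
              exact hind x u w hxu hxw huw hnxu hnyw hnuw
            have hadjxy : G.Adj x y := by
              by_contra hnxy
              exact hind r x y (Ne.symm hxr) (Ne.symm hyr) hxy hnrx hnry hnxy
            have hadjxw : G.Adj x w := by
              by_contra hnxw
              exact hind x u w hxu hxw huw hnxu hnxw hnuw
            have hadjyu : G.Adj y u := by
              by_contra hnyu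
              exact hind y u w hyu hyw huw hnyu hnyw hnuw
            -- cycle r - u - y - x - w - r
            exact hC5 (aux_hasC5 G hadjru hadjyu.symm hadjxy.symm hadjxw hadjrw.symm
              hnry hnrx (fun h => hnxu h.symm) hnuw hnyw)
      -- pick the larger side
      obtain ⟨t, htsub, htclique, htcard⟩ :
          ∃ t : Finset V, t ⊆ s ∧ (∀ u ∈ t, ∀ w ∈ t, u ≠ w → G.Adj u w) ∧
            s.card ≤ 2 * t.card := by
        rcases le_total P1.card P2.card with h | h
        · exact ⟨P2, Finset.filter_subset _ _, hclique2, by omega⟩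
        · exact ⟨P1, Finset.filter_subset _ _, hclique1, by omega⟩
      set e : Fin t.card → {x // x ∈ t} := fun i => t.equivFin.symm i with hedef
      have heinj : ∀ i j : Fin t.card, (e i : V) = (e j : V) → i = j := by
        intro i j h
        exact t.equivFin.symm.injective (Subtype.ext h)
      refine ⟨t.card, fun i => {(e i : V)}, fun i => ⟨(e i : V), rfl⟩, ?_, ?_, ?_, ?_, ?_⟩
      · intro i x hx
        rw [Set.mem_singleton_iff] at hx
        exact hx ▸ (htsub (e i).2)
      · intro i j hij
        exact Set.disjoint_singleton.mpr (fun h => hij (heinj i j h))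
      · intro i
        exact aux_single_conn G _
      · intro i j hij
        exact ⟨(e i : V), rfl, (e j : V), rfl,
          htclique _ (e i).2 _ (e j).2 (fun h => hij (heinj i j h))⟩
      · have : (s.card : ℝ) ≤ 2 * (t.card : ℝ) := by exact_mod_cast htcard
        linarith

end Aux

/-- **Corollary to Theorem 1.** If `G` is a finite simple graph on `n` vertices with
independence number 2 and no induced `C₅`, then there are at least `n/2` pairwise disjoint
nonempty connected vertex subsets, every two of which are joined by an edge. -/
theorem stmt_1 {V : Type*} [Fintype V] (G : SimpleGraph V)
    (hα : G.indepNum' = 2) (hC5 : ¬ G.HasInducedCycle 5) :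
    ∃ (k : ℕ) (B : Fin k → Set V),
      (∀ i, (B i).Nonempty) ∧
      (∀ i j, i ≠ j → Disjoint (B i) (B j)) ∧
      (∀ i, (G.induce (B i)).Connected) ∧
      (∀ i j, i ≠ j → ∃ a ∈ B i, ∃ b ∈ B j, G.Adj a b) ∧
      (Fintype.card V : ℝ) / 2 ≤ (k : ℝ) := by
  classical
  have hind : ∀ x y z : V, x ≠ y → x ≠ z → y ≠ z →
      ¬ G.Adj x y → ¬ G.Adj x z → ¬ G.Adj y z → False :=
    fun x y z h1 h2 h3 h4 h5 h6 => aux_indep3 G hα h1 h2 h3 h4 h5 h6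
  obtain ⟨k, B, hne, _, hdisj, hconn, hcross, hcnt⟩ := aux_main G hind hC5 Finset.univ
  refine ⟨k, B, hne, hdisj, hconn, hcross, ?_⟩
  simpa [Finset.card_univ] using hcnt
end

section
/- Let G be a finite simple connected graph that is claw-free, has independence number α(G) = 3, and contains no induced cycle C₇ on seven vertices. Then for every non-simplicial vertex v of G there exists a connected dominating set D of G with v ∈ D and |D| ≤ 4. -/
open SimpleGraph

section Helpers
variable {V : Type*}

lemma no4 [Fintype V] {G : SimpleGraph V} (hα : G.indepNum' = 3)
    (p q r s : V) (hpq : p ≠ q) (hpr : p ≠ r) (hps : p ≠ s) (hqr : q ≠ r) (hqs : q ≠ s)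
    (hrs : r ≠ s) (apq : ¬G.Adj p q) (apr : ¬G.Adj p r) (aps : ¬G.Adj p s)
    (aqr : ¬G.Adj q r) (aqs : ¬G.Adj q s) (ars : ¬G.Adj r s) : False := by
  classical
  have hmem : (4 : ℕ) ∈ {n | ∃ s : Finset V, G.IsIndepSet' s ∧ s.card = n} := by
    refine ⟨{p,q,r,s}, ?_, ?_⟩
    · intro a ha b hb hne
      simp only [Finset.mem_insert, Finset.mem_singleton] at ha hb
      rcases ha with rfl|rfl|rfl|rfl <;> rcases hb with rfl|rfl|rfl|rfl <;>
        first
          | exact absurd rfl hne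
          | assumption
          | (intro h; first | exact apq h.symm | exact apr h.symm | exact aps h.symm
                            | exact aqr h.symm | exact aqs h.symm | exact ars h.symm)
    · rw [Finset.card_insert_of_notMem (by simp [hpq, hpr, hps]),
        Finset.card_insert_of_notMem (by simp [hqr, hqs]),
        Finset.card_insert_of_notMem (by simp [hrs]), Finset.card_singleton]
  have hbdd : BddAbove {n | ∃ s : Finset V, G.IsIndepSet' s ∧ s.card = n} := by
    refine ⟨Fintype.card V, ?_⟩
    rintro n ⟨t, -, rfl⟩
    exact Finset.card_le_card (Finset.subset_univ t) |>.trans (by simp)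
  have := le_csSup hbdd hmem
  rw [show sSup {n | ∃ s : Finset V, G.IsIndepSet' s ∧ s.card = n} = G.indepNum' from rfl, hα] at this
  omega

lemma exists_boundary {G : SimpleGraph V} (P : V → Prop) :
    ∀ {x y : V}, G.Walk x y → P x → ¬P y → ∃ c d, P c ∧ ¬P d ∧ G.Adj c d := by
  intro x y w
  induction w with
  | nil => intro hx hy; exact absurd hx hy
  | @cons a b c h p ih =>
      intro hx hy
      by_cases hm : P b
      · exact ih hm hy
      · exact ⟨_, _, hx, hm, h⟩

lemma adj_induce {G : SimpleGraph V} {s : Set V} {x y : V}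
    (hx : x ∈ s) (hy : y ∈ s) (h : G.Adj x y) : (G.induce s).Adj ⟨x,hx⟩ ⟨y,hy⟩ := h

lemma conn_of_hub {G : SimpleGraph V} (s : Set V) (hub : V) (hhub : hub ∈ s)
    (h : ∀ x (hx : x ∈ s), (G.induce s).Reachable ⟨x,hx⟩ ⟨hub,hhub⟩) :
    (G.induce s).Connected := by
  rw [SimpleGraph.connected_iff]
  refine ⟨?_, ⟨⟨hub, hhub⟩⟩⟩
  rintro ⟨x, hx⟩ ⟨y, hy⟩
  exact (h x hx).trans (h y hy).symm

lemma card4 [DecidableEq V] (x y z t : V) : ({x,y,z,t} : Finset V).card ≤ 4 := by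
  have h1 := Finset.card_insert_le x ({y,z,t} : Finset V)
  have h2 := Finset.card_insert_le y ({z,t} : Finset V)
  have h3 := Finset.card_insert_le z ({t} : Finset V)
  simp only [Finset.card_singleton] at *
  omega

lemma card3 [DecidableEq V] (x y z : V) : ({x,y,z} : Finset V).card ≤ 4 := by
  have h2 := Finset.card_insert_le x ({y,z} : Finset V)
  have h3 := Finset.card_insert_le y ({z} : Finset V)
  simp only [Finset.card_singleton] at *
  omega

end Helpers

lemma c7_of {V : Type*} (G : SimpleGraph V) (v0 v1 v2 v3 v4 v5 v6 : V)
    (h01 : G.Adj v0 v1) (h12 : G.Adj v1 v2) (h23 : G.Adj v2 v3) (h34 : G.Adj v3 v4) (h45 : G.Adj v4 v5) (h56 : G.Adj v5 v6) (h60 : G.Adj v6 v0)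
    (n02 : ¬ G.Adj v0 v2) (n03 : ¬ G.Adj v0 v3) (n04 : ¬ G.Adj v0 v4) (n05 : ¬ G.Adj v0 v5) (n13 : ¬ G.Adj v1 v3) (n14 : ¬ G.Adj v1 v4) (n15 : ¬ G.Adj v1 v5) (n16 : ¬ G.Adj v1 v6) (n24 : ¬ G.Adj v2 v4) (n25 : ¬ G.Adj v2 v5) (n26 : ¬ G.Adj v2 v6) (n35 : ¬ G.Adj v3 v5) (n36 : ¬ G.Adj v3 v6) (n46 : ¬ G.Adj v4 v6) :
    G.HasInducedCycle 7 := by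
  have d02 : v0 ≠ v2 := fun h => n26 ((h ▸ h60).symm)
  have d03 : v0 ≠ v3 := fun h => n13 ((h ▸ h01).symm)
  have d04 : v0 ≠ v4 := fun h => n14 ((h ▸ h01).symm)
  have d05 : v0 ≠ v5 := fun h => n15 ((h ▸ h01).symm)
  have d13 : v1 ≠ v3 := fun h => n03 (h ▸ h01)
  have d14 : v1 ≠ v4 := fun h => n04 (h ▸ h01)
  have d15 : v1 ≠ v5 := fun h => n05 (h ▸ h01)
  have d16 : v1 ≠ v6 := fun h => n26 ((h ▸ h12).symm)
  have d24 : v2 ≠ v4 := fun h => n14 (h ▸ h12)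
  have d25 : v2 ≠ v5 := fun h => n15 (h ▸ h12)
  have d26 : v2 ≠ v6 := fun h => n16 (h ▸ h12)
  have d35 : v3 ≠ v5 := fun h => n25 (h ▸ h23)
  have d36 : v3 ≠ v6 := fun h => n26 (h ▸ h23)
  have d46 : v4 ≠ v6 := fun h => n36 (h ▸ h34)
  have d01 : v0 ≠ v1 := G.ne_of_adj h01
  have d12 : v1 ≠ v2 := G.ne_of_adj h12
  have d23 : v2 ≠ v3 := G.ne_of_adj h23
  have d34 : v3 ≠ v4 := G.ne_of_adj h34
  have d45 : v4 ≠ v5 := G.ne_of_adj h45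
  have d56 : v5 ≠ v6 := G.ne_of_adj h56
  have d06 : v0 ≠ v6 := (G.ne_of_adj h60).symm
  have seven : ∀ i : ZMod 7, i = 0 ∨ i = 1 ∨ i = 2 ∨ i = 3 ∨ i = 4 ∨ i = 5 ∨ i = 6 := by decide
  refine ⟨![v0,v1,v2,v3,v4,v5,v6], ?_, ?_⟩
  · intro i j h
    rcases seven i with rfl|rfl|rfl|rfl|rfl|rfl|rfl <;>
      rcases seven j with rfl|rfl|rfl|rfl|rfl|rfl|rfl
    · rfl
    · exact absurd h d01
    · exact absurd h d02
    · exact absurd h d03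
    · exact absurd h d04
    · exact absurd h d05
    · exact absurd h d06
    · exact absurd h.symm d01
    · rfl
    · exact absurd h d12
    · exact absurd h d13
    · exact absurd h d14
    · exact absurd h d15
    · exact absurd h d16
    · exact absurd h.symm d02
    · exact absurd h.symm d12
    · rfl
    · exact absurd h d23
    · exact absurd h d24
    · exact absurd h d25
    · exact absurd h d26
    · exact absurd h.symm d03
    · exact absurd h.symm d13
    · exact absurd h.symm d23
    · rfl
    · exact absurd h d34
    · exact absurd h d35
    · exact absurd h d36
    · exact absurd h.symm d04
    · exact absurd h.symm d14
    · exact absurd h.symm d24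
    · exact absurd h.symm d34
    · rfl
    · exact absurd h d45
    · exact absurd h d46
    · exact absurd h.symm d05
    · exact absurd h.symm d15
    · exact absurd h.symm d25
    · exact absurd h.symm d35
    · exact absurd h.symm d45
    · rfl
    · exact absurd h d56
    · exact absurd h.symm d06
    · exact absurd h.symm d16
    · exact absurd h.symm d26
    · exact absurd h.symm d36
    · exact absurd h.symm d46
    · exact absurd h.symm d56
    · rfl
  · intro i j
    rcases seven i with rfl|rfl|rfl|rfl|rfl|rfl|rfl <;>
      rcases seven j with rfl|rfl|rfl|rfl|rfl|rfl|rfl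
    · exact iff_of_false (G.irrefl) (by decide)
    · exact iff_of_true h01 (by decide)
    · exact iff_of_false n02 (by decide)
    · exact iff_of_false n03 (by decide)
    · exact iff_of_false n04 (by decide)
    · exact iff_of_false n05 (by decide)
    · exact iff_of_true h60.symm (by decide)
    · exact iff_of_true h01.symm (by decide)
    · exact iff_of_false (G.irrefl) (by decide)
    · exact iff_of_true h12 (by decide)
    · exact iff_of_false n13 (by decide)
    · exact iff_of_false n14 (by decide)
    · exact iff_of_false n15 (by decide)
    · exact iff_of_false n16 (by decide)
    · exact iff_of_false (fun h => n02 h.symm) (by decide)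
    · exact iff_of_true h12.symm (by decide)
    · exact iff_of_false (G.irrefl) (by decide)
    · exact iff_of_true h23 (by decide)
    · exact iff_of_false n24 (by decide)
    · exact iff_of_false n25 (by decide)
    · exact iff_of_false n26 (by decide)
    · exact iff_of_false (fun h => n03 h.symm) (by decide)
    · exact iff_of_false (fun h => n13 h.symm) (by decide)
    · exact iff_of_true h23.symm (by decide)
    · exact iff_of_false (G.irrefl) (by decide)
    · exact iff_of_true h34 (by decide)
    · exact iff_of_false n35 (by decide)
    · exact iff_of_false n36 (by decide)
    · exact iff_of_false (fun h => n04 h.symm) (by decide)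
    · exact iff_of_false (fun h => n14 h.symm) (by decide)
    · exact iff_of_false (fun h => n24 h.symm) (by decide)
    · exact iff_of_true h34.symm (by decide)
    · exact iff_of_false (G.irrefl) (by decide)
    · exact iff_of_true h45 (by decide)
    · exact iff_of_false n46 (by decide)
    · exact iff_of_false (fun h => n05 h.symm) (by decide)
    · exact iff_of_false (fun h => n15 h.symm) (by decide)
    · exact iff_of_false (fun h => n25 h.symm) (by decide)
    · exact iff_of_false (fun h => n35 h.symm) (by decide)
    · exact iff_of_true h45.symm (by decide)
    · exact iff_of_false (G.irrefl) (by decide)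
    · exact iff_of_true h56 (by decide)
    · exact iff_of_true h60 (by decide)
    · exact iff_of_false (fun h => n16 h.symm) (by decide)
    · exact iff_of_false (fun h => n26 h.symm) (by decide)
    · exact iff_of_false (fun h => n36 h.symm) (by decide)
    · exact iff_of_false (fun h => n46 h.symm) (by decide)
    · exact iff_of_true h56.symm (by decide)
    · exact iff_of_false (G.irrefl) (by decide)

section Main
variable {V : Type*} [Fintype V] {G : SimpleGraph V}

/-- Branch 1: we have `w` adjacent to `a` and to `u ∈ U`, with `w` not adjacent to `v`. -/
lemma branch1 (hα : G.indepNum' = 3) (hC7 : ¬ G.HasInducedCycle 7)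
    (v a b w u : V) (P : V → Prop)
    (hPdef : ∀ c, P c ↔ (¬G.Adj c v ∧ ¬G.Adj c a ∧ ¬G.Adj c b ∧ c ≠ v ∧ c ≠ a ∧ c ≠ b))
    (hva : G.Adj v a) (hvb : G.Adj v b) (hab : ¬G.Adj a b) (hne_ab : a ≠ b)
    (hu : P u) (hwa : G.Adj w a) (hwu : G.Adj w u) (hvw : ¬G.Adj v w) :
    ∃ D : Finset V, v ∈ D ∧ D.card ≤ 4 ∧ (G.induce (D : Set V)).Connected ∧
      (∀ x : V, x ∈ D ∨ ∃ d ∈ D, G.Adj x d) := by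
  classical
  have clique : ∀ c c', P c → P c' → c ≠ c' → G.Adj c c' := by
    intro c c' hc hc' hne
    by_contra hcc
    rw [hPdef] at hc hc'
    exact no4 hα c c' a b hne hc.2.2.2.2.1 hc.2.2.2.2.2 hc'.2.2.2.2.1 hc'.2.2.2.2.2 hne_ab
      hcc hc.2.1 hc.2.2.1 hc'.2.1 hc'.2.2.1 hab
  obtain ⟨hu_v, hu_a, hu_b, hu_nv, hu_na, hu_nb⟩ := (hPdef u).mp hu
  have hw_nv : w ≠ v := fun h => hu_v (by rw [← h]; exact hwu.symm)
  have hw_na : w ≠ a := fun h => hu_a (by rw [← h]; exact hwu.symm)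
  by_cases hdom1 : ∀ x : V, x ∈ ({v,a,w,u} : Finset V) ∨ ∃ d ∈ ({v,a,w,u} : Finset V), G.Adj x d
  · refine ⟨{v,a,w,u}, by simp, card4 v a w u, ?_, hdom1⟩
    have hvm : v ∈ (↑({v,a,w,u} : Finset V) : Set V) := by simp
    have ham : a ∈ (↑({v,a,w,u} : Finset V) : Set V) := by simp
    have hwm : w ∈ (↑({v,a,w,u} : Finset V) : Set V) := by simp
    refine conn_of_hub _ v hvm ?_
    intro x hx
    have hx' : x = v ∨ x = a ∨ x = w ∨ x = u := by simpa using hx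
    rcases hx' with rfl|rfl|rfl|rfl
    · exact Reachable.refl _
    · exact (adj_induce hx hvm hva.symm).reachable
    · exact ((adj_induce hx ham hwa).reachable).trans ((adj_induce ham hvm hva.symm).reachable)
    · exact ((adj_induce hx hwm hwu.symm).reachable).trans
        (((adj_induce hwm ham hwa).reachable).trans ((adj_induce ham hvm hva.symm).reachable))
  · push_neg at hdom1
    obtain ⟨z, hzD, hznd⟩ := hdom1
    have hzv : ¬G.Adj z v := hznd v (by simp)
    have hza : ¬G.Adj z a := hznd a (by simp)
    have hzw : ¬G.Adj z w := hznd w (by simp)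
    have hzu : ¬G.Adj z u := hznd u (by simp)
    have hzne : ¬(z = v ∨ z = a ∨ z = w ∨ z = u) := by simpa using hzD
    push_neg at hzne
    obtain ⟨hz_nv, hz_na, hz_nw, hz_nu⟩ := hzne
    have hzP : ¬P z := fun h => hzu (clique z u h hu hz_nu)
    have hz_nb : z ≠ b := fun h => hzv (by rw [h]; exact hvb.symm)
    have hzb : G.Adj z b := by
      by_contra hzb
      exact hzP ((hPdef z).mpr ⟨hzv, hza, hzb, hz_nv, hz_na, hz_nb⟩)
    by_cases hz2 : ∃ u₂, P u₂ ∧ G.Adj z u₂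
    · obtain ⟨u₂, hu₂, hzu₂⟩ := hz2
      obtain ⟨h2_v, h2_a, h2_b, h2_nv, h2_na, h2_nb⟩ := (hPdef u₂).mp hu₂
      by_cases hdom2 : ∀ x : V, x ∈ ({v,b,z,u₂} : Finset V) ∨
          ∃ d ∈ ({v,b,z,u₂} : Finset V), G.Adj x d
      · refine ⟨{v,b,z,u₂}, by simp, card4 v b z u₂, ?_, hdom2⟩
        have hvm : v ∈ (↑({v,b,z,u₂} : Finset V) : Set V) := by simp
        have hbm : b ∈ (↑({v,b,z,u₂} : Finset V) : Set V) := by simp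
        have hzm : z ∈ (↑({v,b,z,u₂} : Finset V) : Set V) := by simp
        refine conn_of_hub _ v hvm ?_
        intro x hx
        have hx' : x = v ∨ x = b ∨ x = z ∨ x = u₂ := by simpa using hx
        rcases hx' with rfl|rfl|rfl|rfl
        · exact Reachable.refl _
        · exact (adj_induce hx hvm hvb.symm).reachable
        · exact ((adj_induce hx hbm hzb).reachable).trans ((adj_induce hbm hvm hvb.symm).reachable)
        · exact ((adj_induce hx hzm hzu₂.symm).reachable).trans
            (((adj_induce hzm hbm hzb).reachable).trans ((adj_induce hbm hvm hvb.symm).reachable))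
      · push_neg at hdom2
        obtain ⟨y, hyD, hynd⟩ := hdom2
        have hyv : ¬G.Adj y v := hynd v (by simp)
        have hyb : ¬G.Adj y b := hynd b (by simp)
        have hyz : ¬G.Adj y z := hynd z (by simp)
        have hyu₂ : ¬G.Adj y u₂ := hynd u₂ (by simp)
        have hyne : ¬(y = v ∨ y = b ∨ y = z ∨ y = u₂) := by simpa using hyD
        push_neg at hyne
        obtain ⟨hy_nv, hy_nb, hy_nz, hy_nu₂⟩ := hyne
        have hyP : ¬P y := fun h => hyu₂ (clique y u₂ h hu₂ hy_nu₂)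
        have hy_na : y ≠ a := fun h => hyv (by rw [h]; exact hva.symm)
        have hya : G.Adj y a := by
          by_contra hya
          exact hyP ((hPdef y).mpr ⟨hyv, hya, hyb, hy_nv, hy_na, hy_nb⟩)
        by_cases hyu : G.Adj y u
        · exfalso
          apply hC7
          have hne_uu₂ : u ≠ u₂ := fun h => hzu (by rw [h]; exact hzu₂)
          exact c7_of G v a y u u₂ z b
            hva hya.symm hyu (clique u u₂ hu hu₂ hne_uu₂) hzu₂.symm hzb hvb.symm
            (fun h => hyv h.symm) (fun h => hu_v h.symm) (fun h => h2_v h.symm)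
            (fun h => hzv h.symm) (fun h => hu_a h.symm) (fun h => h2_a h.symm)
            (fun h => hza h.symm) hab hyu₂ hyz hyb (fun h => hzu h.symm) hu_b h2_b
        · exfalso
          have hy_nu : y ≠ u := fun h => hu_a (by rw [← h]; exact hya)
          have hz_nu' : z ≠ u := fun h => hu_b (by rw [← h]; exact hzb)
          exact no4 hα y z u v hy_nz hy_nu hy_nv hz_nu' hz_nv hu_nv
            hyz hyu hyv hzu hzv hu_v
    · push_neg at hz2
      by_cases hwall : ∀ c, P c → G.Adj w c
      · refine ⟨{v,a,b,w}, by simp, card4 v a b w, ?_, ?_⟩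
        · have hvm : v ∈ (↑({v,a,b,w} : Finset V) : Set V) := by simp
          have ham : a ∈ (↑({v,a,b,w} : Finset V) : Set V) := by simp
          refine conn_of_hub _ v hvm ?_
          intro x hx
          have hx' : x = v ∨ x = a ∨ x = b ∨ x = w := by simpa using hx
          rcases hx' with rfl|rfl|rfl|rfl
          · exact Reachable.refl _
          · exact (adj_induce hx hvm hva.symm).reachable
          · exact (adj_induce hx hvm hvb.symm).reachable
          · exact ((adj_induce hx ham hwa).reachable).trans ((adj_induce ham hvm hva.symm).reachable)
        · intro x
          by_cases hxD : x ∈ ({v,a,b,w} : Finset V)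
          · exact Or.inl hxD
          · right
            have hxne : ¬(x = v ∨ x = a ∨ x = b ∨ x = w) := by simpa using hxD
            push_neg at hxne
            by_cases hPx : P x
            · exact ⟨w, by simp, (hwall x hPx).symm⟩
            · by_cases hxv : G.Adj x v
              · exact ⟨v, by simp, hxv⟩
              · by_cases hxa : G.Adj x a
                · exact ⟨a, by simp, hxa⟩
                · by_cases hxb : G.Adj x b
                  · exact ⟨b, by simp, hxb⟩
                  · exact absurd ((hPdef x).mpr ⟨hxv, hxa, hxb, hxne.1, hxne.2.1, hxne.2.2.1⟩) hPx
      · push_neg at hwall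
        obtain ⟨u', hPu', hwu'⟩ := hwall
        obtain ⟨h'_v, h'_a, h'_b, h'_nv, h'_na, h'_nb⟩ := (hPdef u').mp hPu'
        have hz_nu' : z ≠ u' := fun h => h'_b (by rw [← h]; exact hzb)
        have hw_nu' : w ≠ u' := fun h => h'_a (by rw [← h]; exact hwa)
        exact absurd (no4 hα z w u' v hz_nw hz_nu' hz_nv hw_nu' hw_nv h'_nv
          hzw (hz2 u' hPu') hzv hwu' (fun h => hvw h.symm) h'_v) not_false

end Main

section Main2
variable {V : Type*} [Fintype V] {G : SimpleGraph V}

lemma mainlem (hα : G.indepNum' = 3) (hC7 : ¬ G.HasInducedCycle 7) (hcf : G.ClawFree)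
    (v a b w u : V) (P : V → Prop)
    (hPdef : ∀ c, P c ↔ (¬G.Adj c v ∧ ¬G.Adj c a ∧ ¬G.Adj c b ∧ c ≠ v ∧ c ≠ a ∧ c ≠ b))
    (hva : G.Adj v a) (hvb : G.Adj v b) (hab : ¬G.Adj a b) (hne_ab : a ≠ b)
    (hu : P u) (hwa : G.Adj w a) (hwu : G.Adj w u) :
    ∃ D : Finset V, v ∈ D ∧ D.card ≤ 4 ∧ (G.induce (D : Set V)).Connected ∧
      (∀ x : V, x ∈ D ∨ ∃ d ∈ D, G.Adj x d) := by
  classical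
  have clique : ∀ c c', P c → P c' → c ≠ c' → G.Adj c c' := by
    intro c c' hc hc' hne
    by_contra hcc
    rw [hPdef] at hc hc'
    exact no4 hα c c' a b hne hc.2.2.2.2.1 hc.2.2.2.2.2 hc'.2.2.2.2.1 hc'.2.2.2.2.2 hne_ab
      hcc hc.2.1 hc.2.2.1 hc'.2.1 hc'.2.2.1 hab
  obtain ⟨hu_v, hu_a, hu_b, hu_nv, hu_na, hu_nb⟩ := (hPdef u).mp hu
  by_cases hvw : G.Adj v w
  swap
  · exact branch1 hα hC7 v a b w u P hPdef hva hvb hab hne_ab hu hwa hwu hvw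
  · by_cases hdom : ∀ x : V, x ∈ ({v,w,u,b} : Finset V) ∨ ∃ d ∈ ({v,w,u,b} : Finset V), G.Adj x d
    · refine ⟨{v,w,u,b}, by simp, card4 v w u b, ?_, hdom⟩
      have hvm : v ∈ (↑({v,w,u,b} : Finset V) : Set V) := by simp
      have hwm : w ∈ (↑({v,w,u,b} : Finset V) : Set V) := by simp
      refine conn_of_hub _ v hvm ?_
      intro x hx
      have hx' : x = v ∨ x = w ∨ x = u ∨ x = b := by simpa using hx
      rcases hx' with rfl|rfl|rfl|rfl
      · exact Reachable.refl _
      · exact (adj_induce hx hvm hvw.symm).reachable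
      · exact ((adj_induce hx hwm hwu.symm).reachable).trans ((adj_induce hwm hvm hvw.symm).reachable)
      · exact (adj_induce hx hvm hvb.symm).reachable
    · push_neg at hdom
      obtain ⟨z, hzD, hznd⟩ := hdom
      have hzv : ¬G.Adj z v := hznd v (by simp)
      have hzw : ¬G.Adj z w := hznd w (by simp)
      have hzu : ¬G.Adj z u := hznd u (by simp)
      have hzb : ¬G.Adj z b := hznd b (by simp)
      have hzne : ¬(z = v ∨ z = w ∨ z = u ∨ z = b) := by simpa using hzD
      push_neg at hzne
      obtain ⟨hz_nv, hz_nw, hz_nu, hz_nb⟩ := hzne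
      have hzP : ¬P z := fun h => hzu (clique z u h hu hz_nu)
      have hz_na : z ≠ a := fun h => hzv (by rw [h]; exact hva.symm)
      have hza : G.Adj z a := by
        by_contra hza
        exact hzP ((hPdef z).mpr ⟨hzv, hza, hzb, hz_nv, hz_na, hz_nb⟩)
      by_cases hz3 : ∃ u₃, P u₃ ∧ G.Adj z u₃
      · obtain ⟨u₃, hu₃, hzu₃⟩ := hz3
        exact branch1 hα hC7 v a b z u₃ P hPdef hva hvb hab hne_ab hu₃ hza hzu₃
          (fun h => hzv h.symm)
      · push_neg at hz3
        by_cases hwall : ∀ c, P c → G.Adj w c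
        · refine ⟨{v,a,b,w}, by simp, card4 v a b w, ?_, ?_⟩
          · have hvm : v ∈ (↑({v,a,b,w} : Finset V) : Set V) := by simp
            have ham : a ∈ (↑({v,a,b,w} : Finset V) : Set V) := by simp
            refine conn_of_hub _ v hvm ?_
            intro x hx
            have hx' : x = v ∨ x = a ∨ x = b ∨ x = w := by simpa using hx
            rcases hx' with rfl|rfl|rfl|rfl
            · exact Reachable.refl _
            · exact (adj_induce hx hvm hva.symm).reachable
            · exact (adj_induce hx hvm hvb.symm).reachable
            · exact ((adj_induce hx ham hwa).reachable).trans
                ((adj_induce ham hvm hva.symm).reachable)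
          · intro x
            by_cases hxD : x ∈ ({v,a,b,w} : Finset V)
            · exact Or.inl hxD
            · right
              have hxne : ¬(x = v ∨ x = a ∨ x = b ∨ x = w) := by simpa using hxD
              push_neg at hxne
              by_cases hPx : P x
              · exact ⟨w, by simp, (hwall x hPx).symm⟩
              · by_cases hxv : G.Adj x v
                · exact ⟨v, by simp, hxv⟩
                · by_cases hxa : G.Adj x a
                  · exact ⟨a, by simp, hxa⟩
                  · by_cases hxb : G.Adj x b
                    · exact ⟨b, by simp, hxb⟩
                    · exact absurd ((hPdef x).mpr
                        ⟨hxv, hxa, hxb, hxne.1, hxne.2.1, hxne.2.2.1⟩) hPx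
        · push_neg at hwall
          obtain ⟨u', hPu', hwu'⟩ := hwall
          obtain ⟨h'_v, h'_a, h'_b, h'_nv, h'_na, h'_nb⟩ := (hPdef u').mp hPu'
          have hwb : ¬G.Adj w b := by
            intro hwb
            exact hcf ⟨w, a, b, u, hne_ab, Ne.symm hu_na, Ne.symm hu_nb, hwa, hwb, hwu,
              hab, fun h => hu_a h.symm, fun h => hu_b h.symm⟩
          have hz_nu' : z ≠ u' := fun h => h'_a (by rw [← h]; exact hza)
          have hu'_nw : u' ≠ w := fun h => h'_a (by rw [h]; exact hwa)
          have hb_nw : b ≠ w := fun h => hab (by rw [h]; exact hwa.symm)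
          exact absurd (no4 hα z u' b w hz_nu' hz_nb hz_nw h'_nb hu'_nw hb_nw
            (hz3 u' hPu') hzb hzw h'_b (fun h => hwu' h.symm) (fun h => hwb h.symm)) not_false

end Main2

/-- **Theorem 2.** If `G` is a finite simple connected claw-free graph with independence
number 3 and no induced `C₇`, then every non-simplicial vertex `v` belongs to a connected
dominating set of at most 4 vertices. -/
theorem stmt_2 {V : Type*} [Fintype V] (G : SimpleGraph V)
    (hconn : G.Connected) (hcf : G.ClawFree)
    (hα : G.indepNum' = 3) (hC7 : ¬ G.HasInducedCycle 7)
    (v : V) (hv : ¬ G.IsSimplicial v) :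
    ∃ D : Finset V, v ∈ D ∧ D.card ≤ 4 ∧
      (G.induce (D : Set V)).Connected ∧
      (∀ u : V, u ∈ D ∨ ∃ d ∈ D, G.Adj u d) := by
  classical
  rw [SimpleGraph.IsSimplicial] at hv
  push_neg at hv
  obtain ⟨a, ha, b, hb, hne_ab, hab⟩ := hv
  rw [SimpleGraph.mem_neighborSet] at ha hb
  set P : V → Prop := fun c =>
    ¬G.Adj c v ∧ ¬G.Adj c a ∧ ¬G.Adj c b ∧ c ≠ v ∧ c ≠ a ∧ c ≠ b with hP
  have hPdef : ∀ c, P c ↔ (¬G.Adj c v ∧ ¬G.Adj c a ∧ ¬G.Adj c b ∧ c ≠ v ∧ c ≠ a ∧ c ≠ b) :=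
    fun c => Iff.rfl
  have hPdef' : ∀ c, P c ↔ (¬G.Adj c v ∧ ¬G.Adj c b ∧ ¬G.Adj c a ∧ c ≠ v ∧ c ≠ b ∧ c ≠ a) := by
    intro c
    constructor <;> rintro ⟨h1,h2,h3,h4,h5,h6⟩ <;> exact ⟨h1,h3,h2,h4,h6,h5⟩
  by_cases hUe : ∀ c, ¬ P c
  · refine ⟨{v,a,b}, by simp, card3 v a b, ?_, ?_⟩
    · have hvm : v ∈ (↑({v,a,b} : Finset V) : Set V) := by simp
      refine conn_of_hub _ v hvm ?_
      intro x hx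
      have hx' : x = v ∨ x = a ∨ x = b := by simpa using hx
      rcases hx' with rfl|rfl|rfl
      · exact Reachable.refl _
      · exact (adj_induce hx hvm ha.symm).reachable
      · exact (adj_induce hx hvm hb.symm).reachable
    · intro x
      by_cases hxD : x ∈ ({v,a,b} : Finset V)
      · exact Or.inl hxD
      · right
        have hxne : ¬(x = v ∨ x = a ∨ x = b) := by simpa using hxD
        push_neg at hxne
        by_cases hxv : G.Adj x v
        · exact ⟨v, by simp, hxv⟩
        · by_cases hxa : G.Adj x a
          · exact ⟨a, by simp, hxa⟩
          · by_cases hxb : G.Adj x b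
            · exact ⟨b, by simp, hxb⟩
            · exact absurd ((hPdef x).mpr ⟨hxv, hxa, hxb, hxne.1, hxne.2.1, hxne.2.2⟩) (hUe x)
  · push_neg at hUe
    obtain ⟨u₀, hu₀⟩ := hUe
    have hvP : ¬ P v := fun h => h.2.2.2.1 rfl
    obtain ⟨c, d, hc, hd, hcd⟩ :=
      exists_boundary P ((hconn.preconnected u₀ v).some) hu₀ hvP
    obtain ⟨hc_v, hc_a, hc_b, hc_nv, hc_na, hc_nb⟩ := (hPdef c).mp hc
    have hd_nv : d ≠ v := fun h => hc_v (by rw [← h]; exact hcd)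
    have hd_na : d ≠ a := fun h => hc_a (by rw [← h]; exact hcd)
    have hd_nb : d ≠ b := fun h => hc_b (by rw [← h]; exact hcd)
    by_cases hda : G.Adj d a
    · exact mainlem hα hC7 hcf v a b d c P hPdef ha hb hab hne_ab hc hda hcd.symm
    · by_cases hdb : G.Adj d b
      · exact mainlem hα (G := G) hC7 hcf v b a d c P hPdef' hb ha
          (fun h => hab h.symm) (Ne.symm hne_ab) hc hdb hcd.symm
      · have hdv : G.Adj d v := by
          by_contra hdv
          exact hd ((hPdef d).mpr ⟨hdv, hda, hdb, hd_nv, hd_na, hd_nb⟩)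
        have hdall : ∀ c', P c' → G.Adj d c' := by
          intro c' hc'
          by_contra hnadj
          obtain ⟨h'_v, h'_a, h'_b, h'_nv, h'_na, h'_nb⟩ := (hPdef c').mp hc'
          have hd_nc' : d ≠ c' := fun h => hd (by rw [h]; exact hc')
          exact no4 hα d c' a b hd_nc' hd_na hd_nb h'_na h'_nb hne_ab
            hnadj hda hdb h'_a h'_b hab
        refine ⟨{v,a,b,d}, by simp, card4 v a b d, ?_, ?_⟩
        · have hvm : v ∈ (↑({v,a,b,d} : Finset V) : Set V) := by simp
          refine conn_of_hub _ v hvm ?_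
          intro x hx
          have hx' : x = v ∨ x = a ∨ x = b ∨ x = d := by simpa using hx
          rcases hx' with rfl|rfl|rfl|rfl
          · exact Reachable.refl _
          · exact (adj_induce hx hvm ha.symm).reachable
          · exact (adj_induce hx hvm hb.symm).reachable
          · exact (adj_induce hx hvm hdv).reachable
        · intro x
          by_cases hxD : x ∈ ({v,a,b,d} : Finset V)
          · exact Or.inl hxD
          · right
            have hxne : ¬(x = v ∨ x = a ∨ x = b ∨ x = d) := by simpa using hxD
            push_neg at hxne
            by_cases hPx : P x
            · exact ⟨d, by simp, (hdall x hPx).symm⟩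
            · by_cases hxv : G.Adj x v
              · exact ⟨v, by simp, hxv⟩
              · by_cases hxa : G.Adj x a
                · exact ⟨a, by simp, hxa⟩
                · by_cases hxb : G.Adj x b
                  · exact ⟨b, by simp, hxb⟩
                  · exact absurd ((hPdef x).mpr
                      ⟨hxv, hxa, hxb, hxne.1, hxne.2.1, hxne.2.2.1⟩) hPx
end

section
/- Let G be a finite simple connected graph with independence number α(G) = 3 that contains no induced cycle C₇ on seven vertices. Then G has a connected dominating set D with |D| ≤ 4. -/
namespace StmtThreeAux

variable {V : Type*}

/-- The goal: a connected dominating set of size at most 4. -/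
def GoodCDS (G : SimpleGraph V) : Prop :=
  ∃ D : Finset V, D.card ≤ 4 ∧
    (G.induce (D : Set V)).Connected ∧
    (∀ u : V, u ∈ D ∨ ∃ d ∈ D, G.Adj u d)

/-- No induced path on five vertices. -/
def NoP5 (G : SimpleGraph V) : Prop :=
  ∀ y0 y1 y2 y3 y4 : V, G.Adj y0 y1 → G.Adj y1 y2 → G.Adj y2 y3 → G.Adj y3 y4 →
    ¬G.Adj y0 y2 → ¬G.Adj y0 y3 → ¬G.Adj y0 y4 → ¬G.Adj y1 y3 → ¬G.Adj y1 y4 →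
    ¬G.Adj y2 y4 → False

/-- No independent set on four vertices. -/
def NoFour (G : SimpleGraph V) : Prop :=
  ∀ p q r s : V, p ≠ q → p ≠ r → p ≠ s → q ≠ r → q ≠ s → r ≠ s →
    ¬G.Adj p q → ¬G.Adj p r → ¬G.Adj p s → ¬G.Adj q r → ¬G.Adj q s → ¬G.Adj r s → False

lemma card4 [DecidableEq V] (a b c d : V) : ({a, b, c, d} : Finset V).card ≤ 4 := by
  apply le_trans (Finset.card_insert_le _ _)
  have h1 := Finset.card_insert_le b ({c, d} : Finset V)
  have h2 := Finset.card_insert_le c ({d} : Finset V)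
  simp only [Finset.card_singleton] at *
  omega

lemma induce_conn_path4 [DecidableEq V] (G : SimpleGraph V) (a b c d : V)
    (h1 : G.Adj a b) (h2 : G.Adj b c) (h3 : G.Adj c d) :
    (G.induce (({a, b, c, d} : Finset V) : Set V)).Connected := by
  rw [SimpleGraph.connected_iff]
  have ha : a ∈ (({a, b, c, d} : Finset V) : Set V) := by simp
  have hb : b ∈ (({a, b, c, d} : Finset V) : Set V) := by simp
  have hc : c ∈ (({a, b, c, d} : Finset V) : Set V) := by simp
  have hd : d ∈ (({a, b, c, d} : Finset V) : Set V) := by simp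
  refine ⟨?_, ⟨⟨b, hb⟩⟩⟩
  have r1 : (G.induce (({a, b, c, d} : Finset V) : Set V)).Adj ⟨a, ha⟩ ⟨b, hb⟩ := h1
  have r2 : (G.induce (({a, b, c, d} : Finset V) : Set V)).Adj ⟨b, hb⟩ ⟨c, hc⟩ := h2
  have r3 : (G.induce (({a, b, c, d} : Finset V) : Set V)).Adj ⟨c, hc⟩ ⟨d, hd⟩ := h3
  have key : ∀ z : (({a, b, c, d} : Finset V) : Set V),
      (G.induce (({a, b, c, d} : Finset V) : Set V)).Reachable z ⟨b, hb⟩ := by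
    rintro ⟨z, hz⟩
    simp only [Finset.coe_insert, Set.mem_insert_iff, Finset.coe_singleton,
      Set.mem_singleton_iff] at hz
    rcases hz with rfl | rfl | rfl | rfl
    · exact r1.reachable
    · exact SimpleGraph.Reachable.refl _
    · exact r2.reachable.symm
    · exact r3.reachable.symm.trans r2.reachable.symm
  intro x y
  exact (key x).trans (key y).symm

lemma induce_conn_star4 [DecidableEq V] (G : SimpleGraph V) (x a b c : V)
    (h1 : G.Adj x a) (h2 : G.Adj x b) (h3 : G.Adj x c) :
    (G.induce (({x, a, b, c} : Finset V) : Set V)).Connected := by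
  rw [SimpleGraph.connected_iff]
  have hx : x ∈ (({x, a, b, c} : Finset V) : Set V) := by simp
  have ha : a ∈ (({x, a, b, c} : Finset V) : Set V) := by simp
  have hb : b ∈ (({x, a, b, c} : Finset V) : Set V) := by simp
  have hc : c ∈ (({x, a, b, c} : Finset V) : Set V) := by simp
  refine ⟨?_, ⟨⟨x, hx⟩⟩⟩
  have r1 : (G.induce (({x, a, b, c} : Finset V) : Set V)).Adj ⟨x, hx⟩ ⟨a, ha⟩ := h1
  have r2 : (G.induce (({x, a, b, c} : Finset V) : Set V)).Adj ⟨x, hx⟩ ⟨b, hb⟩ := h2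
  have r3 : (G.induce (({x, a, b, c} : Finset V) : Set V)).Adj ⟨x, hx⟩ ⟨c, hc⟩ := h3
  have key : ∀ z : (({x, a, b, c} : Finset V) : Set V),
      (G.induce (({x, a, b, c} : Finset V) : Set V)).Reachable z ⟨x, hx⟩ := by
    rintro ⟨z, hz⟩
    simp only [Finset.coe_insert, Set.mem_insert_iff, Finset.coe_singleton,
      Set.mem_singleton_iff] at hz
    rcases hz with rfl | rfl | rfl | rfl
    · exact SimpleGraph.Reachable.refl _
    · exact r1.reachable.symm
    · exact r2.reachable.symm
    · exact r3.reachable.symm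
  intro u v
  exact (key u).trans (key v).symm

lemma good_of_path4 [DecidableEq V] (G : SimpleGraph V) (a b c d : V)
    (h1 : G.Adj a b) (h2 : G.Adj b c) (h3 : G.Adj c d)
    (dom : ∀ u : V, u = a ∨ u = b ∨ u = c ∨ u = d ∨
      G.Adj u a ∨ G.Adj u b ∨ G.Adj u c ∨ G.Adj u d) :
    GoodCDS G := by
  refine ⟨{a, b, c, d}, card4 a b c d, induce_conn_path4 G a b c d h1 h2 h3, ?_⟩
  intro u
  rcases dom u with rfl | rfl | rfl | rfl | h | h | h | h
  · left; simp
  · left; simp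
  · left; simp
  · left; simp
  · right; exact ⟨a, by simp, h⟩
  · right; exact ⟨b, by simp, h⟩
  · right; exact ⟨c, by simp, h⟩
  · right; exact ⟨d, by simp, h⟩

lemma good_of_star4 [DecidableEq V] (G : SimpleGraph V) (x a b c : V)
    (h1 : G.Adj x a) (h2 : G.Adj x b) (h3 : G.Adj x c)
    (dom : ∀ u : V, u = x ∨ u = a ∨ u = b ∨ u = c ∨
      G.Adj u x ∨ G.Adj u a ∨ G.Adj u b ∨ G.Adj u c) :
    GoodCDS G := by
  refine ⟨{x, a, b, c}, card4 x a b c, induce_conn_star4 G x a b c h1 h2 h3, ?_⟩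
  intro u
  rcases dom u with rfl | rfl | rfl | rfl | h | h | h | h
  · left; simp
  · left; simp
  · left; simp
  · left; simp
  · right; exact ⟨x, by simp, h⟩
  · right; exact ⟨a, by simp, h⟩
  · right; exact ⟨b, by simp, h⟩
  · right; exact ⟨c, by simp, h⟩

set_option maxHeartbeats 2000000 in
lemma c7build (G : SimpleGraph V) (u x0 x1 x2 x3 x4 w : V)
    (a1 : G.Adj u x0) (a2 : G.Adj x0 x1) (a3 : G.Adj x1 x2) (a4 : G.Adj x2 x3)
    (a5 : G.Adj x3 x4) (a6 : G.Adj x4 w) (a7 : G.Adj w u)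
    (n1 : ¬G.Adj u x1) (n2 : ¬G.Adj u x2) (n3 : ¬G.Adj u x3) (n4 : ¬G.Adj u x4)
    (n5 : ¬G.Adj x0 x2) (n6 : ¬G.Adj x0 x3) (n7 : ¬G.Adj x0 x4) (n8 : ¬G.Adj x0 w)
    (n9 : ¬G.Adj x1 x3) (n10 : ¬G.Adj x1 x4) (n11 : ¬G.Adj x1 w)
    (n12 : ¬G.Adj x2 x4) (n13 : ¬G.Adj x2 w) (n14 : ¬G.Adj x3 w) :
    G.HasInducedCycle 7 := by
  have s1 := a1.symm; have s2 := a2.symm; have s3 := a3.symm; have s4 := a4.symm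
  have s5 := a5.symm; have s6 := a6.symm; have s7 := a7.symm
  have m1 : ¬G.Adj x1 u := fun h => n1 h.symm
  have m2 : ¬G.Adj x2 u := fun h => n2 h.symm
  have m3 : ¬G.Adj x3 u := fun h => n3 h.symm
  have m4 : ¬G.Adj x4 u := fun h => n4 h.symm
  have m5 : ¬G.Adj x2 x0 := fun h => n5 h.symm
  have m6 : ¬G.Adj x3 x0 := fun h => n6 h.symm
  have m7 : ¬G.Adj x4 x0 := fun h => n7 h.symm
  have m8 : ¬G.Adj w x0 := fun h => n8 h.symm
  have m9 : ¬G.Adj x3 x1 := fun h => n9 h.symm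
  have m10 : ¬G.Adj x4 x1 := fun h => n10 h.symm
  have m11 : ¬G.Adj w x1 := fun h => n11 h.symm
  have m12 : ¬G.Adj x4 x2 := fun h => n12 h.symm
  have m13 : ¬G.Adj w x2 := fun h => n13 h.symm
  have m14 : ¬G.Adj w x3 := fun h => n14 h.symm
  have e1 : u ≠ x0 := a1.ne
  have e2 : u ≠ x1 := fun h => n2 (h ▸ a3)
  have e3 : u ≠ x2 := fun h => n3 (h ▸ a4)
  have e4 : u ≠ x3 := fun h => n4 (h ▸ a5)
  have e5 : u ≠ x4 := fun h => n7 (h ▸ a1).symm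
  have e6 : u ≠ w := fun h => n8 (h ▸ a1).symm
  have e7 : x0 ≠ x1 := a2.ne
  have e8 : x0 ≠ x2 := fun h => n6 (h ▸ a4)
  have e9 : x0 ≠ x3 := fun h => n7 (h ▸ a5)
  have e10 : x0 ≠ x4 := fun h => n8 (h ▸ a6)
  have e11 : x0 ≠ w := fun h => n7 (h ▸ a6).symm
  have e12 : x1 ≠ x2 := a3.ne
  have e13 : x1 ≠ x3 := fun h => n10 (h ▸ a5)
  have e14 : x1 ≠ x4 := fun h => n11 (h ▸ a6)
  have e15 : x1 ≠ w := fun h => n1 (h ▸ a7).symm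
  have e16 : x2 ≠ x3 := a4.ne
  have e17 : x2 ≠ x4 := fun h => n13 (h ▸ a6)
  have e18 : x2 ≠ w := fun h => n2 (h ▸ a7).symm
  have e19 : x3 ≠ x4 := a5.ne
  have e20 : x3 ≠ w := fun h => n3 (h ▸ a7).symm
  have e21 : x4 ≠ w := a6.ne
  haveI : Fact (1 < 7) := ⟨by norm_num⟩
  set g : ℕ → V := fun n =>
    if n = 0 then u else if n = 1 then x0 else if n = 2 then x1 else if n = 3 then x2
    else if n = 4 then x3 else if n = 5 then x4 else w with hg
  refine ⟨fun i => g i.val, ?_, ?_⟩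
  · intro i j hij
    have hij' : g i.val = g j.val := hij
    clear hij
    apply ZMod.val_injective
    have hm : i.val < 7 := i.val_lt
    have hk : j.val < 7 := j.val_lt
    simp only [hg] at hij'
    clear hg
    clear a1 a2 a3 a4 a5 a6 a7 s1 s2 s3 s4 s5 s6 s7 m1 m2 m3 m4 m5 m6 m7 m8 m9 m10 m11 m12
      m13 m14 n1 n2 n3 n4 n5 n6 n7 n8 n9 n10 n11 n12 n13 n14
    show i.val = j.val
    set m := i.val; set k := j.val
    clear_value m k
    interval_cases m <;> interval_cases k <;> norm_num at hij' ⊢ <;> simp_all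
  · intro i j
    have hv : ∀ t : ZMod 7, (t + 1).val = (t.val + 1) % 7 := by
      intro t; rw [ZMod.val_add, ZMod.val_one]
    have hiff : ∀ s t : ZMod 7, (t = s + 1) ↔ (t.val = (s.val + 1) % 7) := by
      intro s t
      constructor
      · intro h; rw [h, hv]
      · intro h; apply ZMod.val_injective; rw [h, ← hv]
    show G.Adj (g i.val) (g j.val) ↔ _
    rw [hiff, hiff]
    have hm : i.val < 7 := i.val_lt
    have hk : j.val < 7 := j.val_lt
    simp only [hg]
    clear hg
    clear e1 e2 e3 e4 e5 e6 e7 e8 e9 e10 e11 e12 e13 e14 e15 e16 e17 e18 e19 e20 e21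
    set m := i.val; set k := j.val
    clear_value m k
    interval_cases m <;> interval_cases k <;> norm_num <;>
      first
        | assumption
        | exact fun h => G.loopless _ h

/-- Case: the graph contains an induced path on five vertices. -/
lemma caseP5 [DecidableEq V] (G : SimpleGraph V) (h4 : NoFour G)
    (hC7 : ¬G.HasInducedCycle 7) (x0 x1 x2 x3 x4 : V)
    (p1 : G.Adj x0 x1) (p2 : G.Adj x1 x2) (p3 : G.Adj x2 x3) (p4 : G.Adj x3 x4)
    (q1 : ¬G.Adj x0 x2) (q2 : ¬G.Adj x0 x3) (q3 : ¬G.Adj x0 x4)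
    (q4 : ¬G.Adj x1 x3) (q5 : ¬G.Adj x1 x4) (q6 : ¬G.Adj x2 x4) :
    GoodCDS G := by
  have d02 : x0 ≠ x2 := fun h => q2 (by rw [h]; exact p3)
  have d04 : x0 ≠ x4 := fun h => q2 (by rw [h]; exact p4.symm)
  have d24 : x2 ≠ x4 := fun h => q5 (by rw [← h]; exact p2)
  have hdom : ∀ v : V, v = x0 ∨ v = x1 ∨ v = x2 ∨ v = x3 ∨ v = x4 ∨
      G.Adj v x0 ∨ G.Adj v x1 ∨ G.Adj v x2 ∨ G.Adj v x3 ∨ G.Adj v x4 := by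
    intro v
    by_contra hcon
    push_neg at hcon
    obtain ⟨ne0, ne1, ne2, ne3, ne4, na0, na1, na2, na3, na4⟩ := hcon
    exact h4 v x0 x2 x4 ne0 ne2 ne4 d02 d04 d24 na0 na2 na4 q1 q3 q6
  by_cases hA : ∃ u, G.Adj u x0 ∧ ¬G.Adj u x1 ∧ ¬G.Adj u x2 ∧ ¬G.Adj u x3 ∧ ¬G.Adj u x4
  · obtain ⟨u, hu0, hu1, hu2, hu3, hu4⟩ := hA
    by_cases hB : ∃ w, G.Adj w x4 ∧ ¬G.Adj w x0 ∧ ¬G.Adj w x1 ∧ ¬G.Adj w x2 ∧ ¬G.Adj w x3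
    · obtain ⟨w, hw4, hw0, hw1, hw2, hw3⟩ := hB
      by_cases huw : G.Adj u w
      · exact absurd (c7build G u x0 x1 x2 x3 x4 w hu0 p1 p2 p3 p4 hw4.symm huw.symm
          hu1 hu2 hu3 hu4 q1 q2 q3 (fun h => hw0 h.symm) q4 q5 (fun h => hw1 h.symm)
          q6 (fun h => hw2 h.symm) (fun h => hw3 h.symm)) hC7
      · -- {u, x1, x3, w} is an independent 4-set
        exfalso
        have du1 : u ≠ x1 := fun h => hu2 (by rw [h]; exact p2)
        have du3 : u ≠ x3 := fun h => hu4 (by rw [h]; exact p4)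
        have duw : u ≠ w := fun h => hw0 (by rw [← h]; exact hu0)
        have d13 : x1 ≠ x3 := fun h => q5 (by rw [h]; exact p4)
        have d1w : x1 ≠ w := fun h => hw0 (by rw [← h]; exact p1.symm)
        have d3w : x3 ≠ w := fun h => hw2 (by rw [← h]; exact p3.symm)
        exact h4 u x1 x3 w du1 du3 duw d13 d1w d3w hu1 hu3 huw q4
          (fun h => hw1 h.symm) (fun h => hw3 h.symm)
    · -- no private neighbor of x4 side: {x0,x1,x2,x3} works
      apply good_of_path4 G x0 x1 x2 x3 p1 p2 p3
      intro v
      rcases hdom v with h | h | h | h | h | h | h | h | h | h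
      · rw [h]; tauto
      · rw [h]; tauto
      · rw [h]; tauto
      · rw [h]; tauto
      · rw [h]; have : G.Adj x4 x3 := p4.symm; tauto
      · tauto
      · tauto
      · tauto
      · tauto
      · by_cases h0 : G.Adj v x0; · tauto
        by_cases h1 : G.Adj v x1; · tauto
        by_cases h2 : G.Adj v x2; · tauto
        by_cases h3 : G.Adj v x3; · tauto
        exact absurd ⟨h, h0, h1, h2, h3⟩ (fun hh => hB ⟨v, hh⟩)
  · -- no private neighbor of x0 side: {x1,x2,x3,x4} works
    apply good_of_path4 G x1 x2 x3 x4 p2 p3 p4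
    intro v
    rcases hdom v with h | h | h | h | h | h | h | h | h | h
    · rw [h]; have : G.Adj x0 x1 := p1; tauto
    · rw [h]; tauto
    · rw [h]; tauto
    · rw [h]; tauto
    · rw [h]; tauto
    · by_cases h1 : G.Adj v x1; · tauto
      by_cases h2 : G.Adj v x2; · tauto
      by_cases h3 : G.Adj v x3; · tauto
      by_cases h4' : G.Adj v x4; · tauto
      exact absurd ⟨h, h1, h2, h3, h4'⟩ (fun hh => hA ⟨v, hh⟩)
    · tauto
    · tauto
    · tauto
    · tauto

/-- Sub-case of `caseAB`: there is an AB-vertex `x`, a BC-vertex `y`,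
and no AB-vertex is adjacent to any C-vertex. -/
lemma caseAB_BC [DecidableEq V] (G : SimpleGraph V) (hP5 : NoP5 G) (a b c : V)
    (nab : ¬G.Adj a b) (nac : ¬G.Adj a c) (nbc : ¬G.Adj b c)
    (htri : ∀ v : V, v = a ∨ v = b ∨ v = c ∨ G.Adj v a ∨ G.Adj v b ∨ G.Adj v c)
    (hCAB : ∀ x' w' : V, G.Adj x' a → G.Adj x' b → ¬G.Adj x' c →
      G.Adj w' c → ¬G.Adj w' a → ¬G.Adj w' b → ¬G.Adj x' w')
    (x : V) (hxa : G.Adj x a) (hxb : G.Adj x b) (hxc : ¬G.Adj x c)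
    (y : V) (hyb : G.Adj y b) (hyc : G.Adj y c) (hya : ¬G.Adj y a) :
    GoodCDS G := by
  by_cases hxy : G.Adj x y
  · apply good_of_path4 G a x b y hxa.symm hxb hyb.symm
    intro v
    rcases htri v with h | h | h | hva | hvb | hvc
    · rw [h]; tauto
    · rw [h]; tauto
    · rw [h]; have : G.Adj c y := hyc.symm; tauto
    · tauto
    · tauto
    · by_cases hva2 : G.Adj v a; · tauto
      by_cases hvb2 : G.Adj v b; · tauto
      have hvy : G.Adj v y := by
        by_contra hvy
        exact hP5 v c y x a hvc hyc.symm hxy.symm hxa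
          hvy (fun h => hCAB x v hxa hxb hxc hvc hva2 hvb2 h.symm) hva2
          (fun h => hxc h.symm) (fun h => nac h.symm) hya
      tauto
  · exact (hP5 a x b y c hxa.symm hxb hyb.symm hyc nab
      (fun h => hya h.symm) nac hxy hxc nbc).elim

/-- Case: some vertex `x` is adjacent to `a` and `b` (but not `c`). -/
lemma caseAB [DecidableEq V] (G : SimpleGraph V) (hconn : G.Connected) (hP5 : NoP5 G)
    (a b c : V) (hac_ne : a ≠ c)
    (nab : ¬G.Adj a b) (nac : ¬G.Adj a c) (nbc : ¬G.Adj b c)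
    (htri : ∀ v : V, v = a ∨ v = b ∨ v = c ∨ G.Adj v a ∨ G.Adj v b ∨ G.Adj v c)
    (hABC : ∀ h : V, ¬(G.Adj h a ∧ G.Adj h b ∧ G.Adj h c))
    (x : V) (hxa : G.Adj x a) (hxb : G.Adj x b) (hxc : ¬G.Adj x c) :
    GoodCDS G := by
  by_cases hC : ∃ w, G.Adj w c ∧ ¬G.Adj w a ∧ ¬G.Adj w b
  · obtain ⟨w, hwc, hwa, hwb⟩ := hC
    by_cases hlink : ∃ x' w', (G.Adj x' a ∧ G.Adj x' b ∧ ¬G.Adj x' c) ∧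
        (G.Adj w' c ∧ ¬G.Adj w' a ∧ ¬G.Adj w' b) ∧ G.Adj x' w'
    · obtain ⟨x', w', ⟨hx'a, hx'b, hx'c⟩, ⟨hw'c, hw'a, hw'b⟩, hxw⟩ := hlink
      apply good_of_path4 G b x' w' c hx'b.symm hxw hw'c
      intro v
      rcases htri v with h | h | h | hva | hvb | hvc
      · rw [h]; have : G.Adj a x' := hx'a.symm; tauto
      · rw [h]; tauto
      · rw [h]; tauto
      · by_cases hvb2 : G.Adj v b; · tauto
        by_cases hvc2 : G.Adj v c; · tauto
        have : G.Adj v x' ∨ G.Adj v w' := by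
          by_cases h1 : G.Adj v x'; · tauto
          by_cases h2 : G.Adj v w'; · tauto
          exact (hP5 v a x' w' c hva hx'a.symm hxw hw'c
            h1 h2 hvc2 (fun h => hw'a h.symm) nac (fun h => hx'c h)).elim
        tauto
      · tauto
      · tauto
    · have hCABneg : ∀ x' w' : V, G.Adj x' a → G.Adj x' b → ¬G.Adj x' c →
          G.Adj w' c → ¬G.Adj w' a → ¬G.Adj w' b → ¬G.Adj x' w' := by
        intro x' w' h1 h2 h3 h4 h5 h6 h7
        exact hlink ⟨x', w', ⟨h1, h2, h3⟩, ⟨h4, h5, h6⟩, h7⟩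
      by_cases hBC : ∃ y, G.Adj y b ∧ G.Adj y c ∧ ¬G.Adj y a
      · obtain ⟨y, h1, h2, h3⟩ := hBC
        exact caseAB_BC G hP5 a b c nab nac nbc htri hCABneg x hxa hxb hxc y h1 h2 h3
      · by_cases hAC : ∃ y, G.Adj y a ∧ G.Adj y c ∧ ¬G.Adj y b
        · obtain ⟨y, h1, h2, h3⟩ := hAC
          exact caseAB_BC G hP5 b a c (fun h => nab h.symm) nbc nac
            (fun v => by rcases htri v with h | h | h | h | h | h <;> tauto)
            (fun x' w' k1 k2 k3 k4 k5 k6 => hCABneg x' w' k2 k1 k3 k4 k6 k5)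
            x hxb hxa hxc y h1 h2 h3
        · -- both AC and BC empty: contradiction via connectivity
          exfalso
          have hcS : c ∈ {z : V | z = c ∨ (G.Adj z c ∧ ¬G.Adj z a ∧ ¬G.Adj z b)} :=
            Or.inl rfl
          have haS : a ∉ {z : V | z = c ∨ (G.Adj z c ∧ ¬G.Adj z a ∧ ¬G.Adj z b)} := by
            rintro (h | ⟨h, -, -⟩)
            · exact hac_ne h
            · exact nac h
          obtain ⟨p⟩ := hconn.preconnected c a
          obtain ⟨d, -, hdS, hdnS⟩ := p.exists_boundary_dart _ hcS haS
          have hadj : G.Adj d.toProd.1 d.toProd.2 := d.adj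
          set z1 := d.toProd.1
          set z2 := d.toProd.2
          have hp2c : ¬G.Adj z2 c := by
            intro h
            by_cases h2 : G.Adj z2 a
            · by_cases h3 : G.Adj z2 b
              · exact hABC z2 ⟨h2, h3, h⟩
              · exact hAC ⟨z2, h2, h, h3⟩
            · by_cases h3 : G.Adj z2 b
              · exact hBC ⟨z2, h3, h, h2⟩
              · exact hdnS (Or.inr ⟨h, h2, h3⟩)
          have hp2nc : z2 ≠ c := fun h => hdnS (Or.inl h)
          have hp1 : G.Adj z1 c ∧ ¬G.Adj z1 a ∧ ¬G.Adj z1 b := by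
            rcases hdS with h | h
            · exfalso; apply hp2c; rw [h] at hadj; exact hadj.symm
            · exact h
          obtain ⟨hp1c, hp1a, hp1b⟩ := hp1
          by_cases hza : G.Adj z2 a
          · by_cases hzb2 : G.Adj z2 b
            · exact hCABneg z2 z1 hza hzb2 hp2c hp1c hp1a hp1b hadj.symm
            · by_cases hzx : G.Adj z2 x
              · exact hP5 c z1 z2 x b hp1c.symm hadj hzx hxb
                  (fun h => hp2c h.symm) (fun h => hxc h.symm) (fun h => nbc h.symm)
                  (fun h => hCABneg x z1 hxa hxb hxc hp1c hp1a hp1b h.symm) hp1b hzb2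
              · exact hP5 z1 z2 a x b hadj hza hxa.symm hxb
                  hp1a (fun h => hCABneg x z1 hxa hxb hxc hp1c hp1a hp1b h.symm) hp1b
                  hzx hzb2 nab
          · by_cases hzb : G.Adj z2 b
            · by_cases hzx : G.Adj z2 x
              · exact hP5 c z1 z2 x a hp1c.symm hadj hzx hxa
                  (fun h => hp2c h.symm) (fun h => hxc h.symm) (fun h => nac h.symm)
                  (fun h => hCABneg x z1 hxa hxb hxc hp1c hp1a hp1b h.symm) hp1a hza
              · exact hP5 z1 z2 b x a hadj hzb hxb.symm hxa
                  hp1b (fun h => hCABneg x z1 hxa hxb hxc hp1c hp1a hp1b h.symm) hp1a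
                  hzx hza (fun h => nab h.symm)
            · rcases htri z2 with h | h | h | h | h | h
              · exact hp1a (h ▸ hadj)
              · exact hp1b (h ▸ hadj)
              · exact hp2nc h
              · exact hza h
              · exact hzb h
              · exact hp2c h
  · -- C is empty
    have hcy : ∃ y, G.Adj c y := by
      obtain ⟨p⟩ := hconn.preconnected c a
      cases p with
      | nil => exact absurd rfl hac_ne
      | cons h q => exact ⟨_, h⟩
    obtain ⟨y, hcy⟩ := hcy
    by_cases hya : G.Adj y a
    · by_cases hyb : G.Adj y b
      · exact absurd ⟨hya, hyb, hcy.symm⟩ (hABC y)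
      · apply good_of_path4 G b x a y hxb.symm hxa hya.symm
        intro v
        rcases htri v with h | h | h | hva | hvb | hvc
        · rw [h]; tauto
        · rw [h]; tauto
        · rw [h]; tauto
        · tauto
        · tauto
        · by_cases hva2 : G.Adj v a; · tauto
          by_cases hvb2 : G.Adj v b; · tauto
          exact absurd ⟨v, hvc, hva2, hvb2⟩ hC
    · by_cases hyb : G.Adj y b
      · apply good_of_path4 G a x b y hxa.symm hxb hyb.symm
        intro v
        rcases htri v with h | h | h | hva | hvb | hvc
        · rw [h]; tauto
        · rw [h]; tauto
        · rw [h]; tauto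
        · tauto
        · tauto
        · by_cases hva2 : G.Adj v a; · tauto
          by_cases hvb2 : G.Adj v b; · tauto
          exact absurd ⟨v, hvc, hva2, hvb2⟩ hC
      · exact absurd ⟨y, hcy.symm, hya, hyb⟩ hC


set_option maxHeartbeats 1000000 in
/-- Case: no vertex is adjacent to two of `a,b,c`; there is an edge `u v` with
`u` adjacent to `a` and `v` adjacent to `b`. -/
lemma caseNoPair' [DecidableEq V] (G : SimpleGraph V) (hconn : G.Connected) (hP5 : NoP5 G)
    (a b c : V) (hac_ne : a ≠ c)
    (nab : ¬G.Adj a b) (nac : ¬G.Adj a c) (nbc : ¬G.Adj b c)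
    (hpAB : ∀ z : V, ¬(G.Adj z a ∧ G.Adj z b))
    (hpAC : ∀ z : V, ¬(G.Adj z a ∧ G.Adj z c))
    (hpBC : ∀ z : V, ¬(G.Adj z b ∧ G.Adj z c))
    (htri : ∀ v : V, v = a ∨ v = b ∨ v = c ∨ G.Adj v a ∨ G.Adj v b ∨ G.Adj v c)
    (u v : V) (hua : G.Adj u a) (hvb : G.Adj v b) (huv : G.Adj u v) :
    GoodCDS G := by
  have hub : ¬G.Adj u b := fun h => hpAB u ⟨hua, h⟩
  have huc : ¬G.Adj u c := fun h => hpAC u ⟨hua, h⟩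
  have hva : ¬G.Adj v a := fun h => hpAB v ⟨h, hvb⟩
  have hvc : ¬G.Adj v c := fun h => hpBC v ⟨hvb, h⟩
  have hAf : ∀ s, G.Adj s a → G.Adj s u ∨ G.Adj s v := by
    intro s hsa
    by_cases h1 : G.Adj s u; · tauto
    by_cases h2 : G.Adj s v; · tauto
    exact (hP5 b v u a s hvb.symm huv.symm hua hsa.symm
      (fun h => hub h.symm) (fun h => nab h.symm) (fun h => hpAB s ⟨hsa, h.symm⟩)
      hva (fun h => h2 h.symm) (fun h => h1 h.symm)).elim
  have hBf : ∀ t, G.Adj t b → G.Adj t u ∨ G.Adj t v := by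
    intro t htb
    by_cases h1 : G.Adj t u; · tauto
    by_cases h2 : G.Adj t v; · tauto
    exact (hP5 a u v b t hua.symm huv hvb htb.symm
      (fun h => hva h.symm) nab (fun h => hpAB t ⟨h.symm, htb⟩)
      hub (fun h => h1 h.symm) (fun h => h2 h.symm)).elim
  -- find a C-vertex with a neighbor outside the C-group
  have hcS : c ∈ {z : V | z = c ∨ G.Adj z c} := Or.inl rfl
  have haS : a ∉ {z : V | z = c ∨ G.Adj z c} := by
    rintro (h | h)
    · exact hac_ne h
    · exact nac h
  obtain ⟨p⟩ := hconn.preconnected c a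
  obtain ⟨d, -, hdS, hdnS⟩ := p.exists_boundary_dart _ hcS haS
  have hadj : G.Adj d.toProd.1 d.toProd.2 := d.adj
  set z1 := d.toProd.1
  set z2 := d.toProd.2
  have hqc : ¬G.Adj z2 c := fun h => hdnS (Or.inr h)
  have hqnc : z2 ≠ c := fun h => hdnS (Or.inl h)
  have hpc : G.Adj z1 c := by
    rcases hdS with h | h
    · exfalso; apply hqc; rw [h] at hadj; exact hadj.symm
    · exact h
  by_cases hwv : G.Adj z1 v
  · -- D = {a, u, v, z1}
    apply good_of_path4 G a u v z1 hua.symm huv hwv.symm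
    intro r
    rcases htri r with h | h | h | hra | hrb | hrc
    · rw [h]; tauto
    · rw [h]; have : G.Adj b v := hvb.symm; tauto
    · rw [h]; have : G.Adj c z1 := hpc.symm; tauto
    · have := hAf r hra; tauto
    · have := hBf r hrb; tauto
    · by_cases h1 : G.Adj r v; · tauto
      by_cases h2 : G.Adj r z1; · tauto
      exact (hP5 b v z1 c r hvb.symm hwv.symm hpc hrc.symm
        (fun hh => hpBC z1 ⟨hh.symm, hpc⟩) nbc (fun hh => hpBC r ⟨hh.symm, hrc⟩)
        hvc (fun hh => h1 hh.symm) (fun hh => h2 hh.symm)).elim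
  · by_cases hwu : G.Adj z1 u
    · -- D = {u, a, v, z1} (star centered at u)
      apply good_of_star4 G u a v z1 hua huv hwu.symm
      intro r
      rcases htri r with h | h | h | hra | hrb | hrc
      · rw [h]; have : G.Adj a u := hua.symm; tauto
      · rw [h]; have : G.Adj b v := hvb.symm; tauto
      · rw [h]; have : G.Adj c z1 := hpc.symm; tauto
      · have := hAf r hra; tauto
      · have := hBf r hrb; tauto
      · by_cases h1 : G.Adj r v; · tauto
        by_cases h2 : G.Adj r u; · tauto
        by_cases h3 : G.Adj r z1; · tauto
        exact (hP5 v u z1 c r huv.symm hwu.symm hpc hrc.symm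
          (fun hh => hwv hh.symm) hvc (fun hh => h1 hh.symm)
          huc (fun hh => h2 hh.symm) (fun hh => h3 hh.symm)).elim
    · -- z1 adjacent to neither u nor v: contradiction
      exfalso
      rcases htri z2 with h | h | h | hqa | hqb | h
      · rw [h] at hadj; exact hpAC z1 ⟨hadj, hpc⟩
      · rw [h] at hadj; exact hpBC z1 ⟨hadj, hpc⟩
      · exact hqnc h
      · by_cases hzv2 : G.Adj z2 v
        · exact hP5 c z1 z2 v b hpc.symm hadj hzv2 hvb
            (fun hh => hqc hh.symm) (fun hh => hvc hh.symm) (fun hh => nbc hh.symm)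
            hwv (fun hh => hpBC z1 ⟨hh, hpc⟩) (fun hh => hpAB z2 ⟨hqa, hh⟩)
        · have hzu : G.Adj z2 u := (hAf z2 hqa).resolve_right hzv2
          exact hP5 c z1 z2 u v hpc.symm hadj hzu huv
            (fun hh => hqc hh.symm) (fun hh => huc hh.symm) (fun hh => hvc hh.symm)
            hwu hwv hzv2
      · by_cases hzu2 : G.Adj z2 u
        · exact hP5 c z1 z2 u a hpc.symm hadj hzu2 hua
            (fun hh => hqc hh.symm) (fun hh => huc hh.symm) (fun hh => nac hh.symm)
            hwu (fun hh => hpAC z1 ⟨hh, hpc⟩) (fun hh => hpAB z2 ⟨hh, hqb⟩)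
        · have hzv : G.Adj z2 v := (hBf z2 hqb).resolve_left hzu2
          exact hP5 c z1 z2 v u hpc.symm hadj hzv huv.symm
            (fun hh => hqc hh.symm) (fun hh => hvc hh.symm) (fun hh => huc hh.symm)
            hwv hwu hzu2
      · exact hqc h

/-- Case: no vertex is adjacent to two of `a,b,c`. -/
lemma caseNoPair [DecidableEq V] (G : SimpleGraph V) (hconn : G.Connected) (hP5 : NoP5 G)
    (a b c : V) (hab_ne : a ≠ b) (hac_ne : a ≠ c)
    (nab : ¬G.Adj a b) (nac : ¬G.Adj a c) (nbc : ¬G.Adj b c)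
    (hpAB : ∀ z : V, ¬(G.Adj z a ∧ G.Adj z b))
    (hpAC : ∀ z : V, ¬(G.Adj z a ∧ G.Adj z c))
    (hpBC : ∀ z : V, ¬(G.Adj z b ∧ G.Adj z c))
    (htri : ∀ v : V, v = a ∨ v = b ∨ v = c ∨ G.Adj v a ∨ G.Adj v b ∨ G.Adj v c) :
    GoodCDS G := by
  have haS : a ∈ {z : V | z = a ∨ G.Adj z a} := Or.inl rfl
  have hbS : b ∉ {z : V | z = a ∨ G.Adj z a} := by
    rintro (h | h)
    · exact hab_ne h.symm
    · exact nab h.symm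
  obtain ⟨p⟩ := hconn.preconnected a b
  obtain ⟨d, -, hdS, hdnS⟩ := p.exists_boundary_dart _ haS hbS
  have hadj : G.Adj d.toProd.1 d.toProd.2 := d.adj
  have hqa : ¬G.Adj d.toProd.2 a := fun h => hdnS (Or.inr h)
  have hqna : d.toProd.2 ≠ a := fun h => hdnS (Or.inl h)
  have hpa : G.Adj d.toProd.1 a := by
    rcases hdS with h | h
    · exfalso; apply hqa; rw [h] at hadj; exact hadj.symm
    · exact h
  rcases htri d.toProd.2 with h | h | h | h | hqb | hqc
  · exact (hqna h).elim
  · exact ((hpAB d.toProd.1) ⟨hpa, h ▸ hadj⟩).elim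
  · exact ((hpAC d.toProd.1) ⟨hpa, h ▸ hadj⟩).elim
  · exact (hqa h).elim
  · exact caseNoPair' G hconn hP5 a b c hac_ne nab nac nbc hpAB hpAC hpBC htri
      d.toProd.1 d.toProd.2 hpa hqb hadj
  · exact caseNoPair' G hconn hP5 a c b hab_ne nac nab (fun h => nbc h.symm)
      hpAC hpAB (fun z hz => hpBC z ⟨hz.2, hz.1⟩)
      (fun v => by rcases htri v with h | h | h | h | h | h <;> tauto)
      d.toProd.1 d.toProd.2 hpa hqc hadj

/-- The P5-free case of the main theorem. -/
lemma case_noP5 [DecidableEq V] (G : SimpleGraph V) (hconn : G.Connected)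
    (h4 : NoFour G) (hP5 : NoP5 G)
    (a b c : V) (hab : a ≠ b) (hac : a ≠ c) (hbc : b ≠ c)
    (nab : ¬G.Adj a b) (nac : ¬G.Adj a c) (nbc : ¬G.Adj b c) :
    GoodCDS G := by
  have htri : ∀ v : V, v = a ∨ v = b ∨ v = c ∨ G.Adj v a ∨ G.Adj v b ∨ G.Adj v c := by
    intro v
    by_contra hcon
    push_neg at hcon
    obtain ⟨h1, h2, h3, k1, k2, k3⟩ := hcon
    exact h4 v a b c h1 h2 h3 hab hac hbc k1 k2 k3 nab nac nbc
  by_cases hstar : ∃ h : V, G.Adj h a ∧ G.Adj h b ∧ G.Adj h c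
  · obtain ⟨x, h1, h2, h3⟩ := hstar
    apply good_of_star4 G x a b c h1 h2 h3
    intro v
    rcases htri v with h | h | h | h | h | h
    · rw [h]; tauto
    · rw [h]; tauto
    · rw [h]; tauto
    · tauto
    · tauto
    · tauto
  · have hABC : ∀ h : V, ¬(G.Adj h a ∧ G.Adj h b ∧ G.Adj h c) := fun h hh => hstar ⟨h, hh⟩
    by_cases hAB : ∃ x, G.Adj x a ∧ G.Adj x b
    · obtain ⟨x, h1, h2⟩ := hAB
      exact caseAB G hconn hP5 a b c hac nab nac nbc htri hABC x h1 h2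
        (fun h => hABC x ⟨h1, h2, h⟩)
    · by_cases hAC : ∃ x, G.Adj x a ∧ G.Adj x c
      · obtain ⟨x, h1, h2⟩ := hAC
        exact caseAB G hconn hP5 a c b hab nac nab (fun h => nbc h.symm)
          (fun v => by rcases htri v with h | h | h | h | h | h <;> tauto)
          (fun h hh => hABC h ⟨hh.1, hh.2.2, hh.2.1⟩)
          x h1 h2 (fun h => hAB ⟨x, h1, h⟩)
      · by_cases hBC : ∃ x, G.Adj x b ∧ G.Adj x c
        · obtain ⟨x, h1, h2⟩ := hBC
          exact caseAB G hconn hP5 b c a hab.symm nbc (fun h => nab h.symm)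
            (fun h => nac h.symm)
            (fun v => by rcases htri v with h | h | h | h | h | h <;> tauto)
            (fun h hh => hABC h ⟨hh.2.2, hh.1, hh.2.1⟩)
            x h1 h2 (fun h => hAB ⟨x, h, h1⟩)
        · exact caseNoPair G hconn hP5 a b c hab hac nab nac nbc
            (fun z hz => hAB ⟨z, hz⟩) (fun z hz => hAC ⟨z, hz⟩)
            (fun z hz => hBC ⟨z, hz⟩) htri


end StmtThreeAux

/-- If `G` is a finite simple connected graph with independence number 3 and no induced `C₇`,
then `G` has a connected dominating set of at most 4 vertices. -/
theorem stmt_3 {V : Type*} [Fintype V] (G : SimpleGraph V)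
    (hconn : G.Connected) (hα : G.indepNum' = 3) (hC7 : ¬ G.HasInducedCycle 7) :
    ∃ D : Finset V, D.card ≤ 4 ∧
      (G.induce (D : Set V)).Connected ∧
      (∀ u : V, u ∈ D ∨ ∃ d ∈ D, G.Adj u d) := by
  classical
  open StmtThreeAux in
  have hgood : StmtThreeAux.GoodCDS G := by
    have hbdd : BddAbove {n | ∃ s : Finset V, G.IsIndepSet' s ∧ s.card = n} := by
      refine ⟨Fintype.card V, ?_⟩
      rintro n ⟨s, -, rfl⟩
      exact Finset.card_le_univ s
    have hne : {n | ∃ s : Finset V, G.IsIndepSet' s ∧ s.card = n}.Nonempty :=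
      ⟨0, ∅, by simp [SimpleGraph.IsIndepSet'], by simp⟩
    have h4 : StmtThreeAux.NoFour G := by
      intro p q r s hpq hpr hps hqr hqs hrs n1 n2 n3 n4 n5 n6
      have hmem : ({p, q, r, s} : Finset V).card ∈
          {n | ∃ s : Finset V, G.IsIndepSet' s ∧ s.card = n} := by
        refine ⟨{p, q, r, s}, ?_, rfl⟩
        intro x hx y hy hne'
        simp only [Finset.mem_insert, Finset.mem_singleton] at hx hy
        rcases hx with rfl | rfl | rfl | rfl <;> rcases hy with rfl | rfl | rfl | rfl <;>
          first
            | exact absurd rfl hne'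
            | assumption
            | (intro hadj; exact n1 hadj.symm)
            | (intro hadj; exact n2 hadj.symm)
            | (intro hadj; exact n3 hadj.symm)
            | (intro hadj; exact n4 hadj.symm)
            | (intro hadj; exact n5 hadj.symm)
            | (intro hadj; exact n6 hadj.symm)
      have hc4 : ({p, q, r, s} : Finset V).card = 4 := by
        rw [Finset.card_insert_of_notMem (by simp [hpq, hpr, hps]),
          Finset.card_insert_of_notMem (by simp [hqr, hqs]),
          Finset.card_insert_of_notMem (by simp [hrs]), Finset.card_singleton]
      have := le_csSup hbdd hmem
      rw [hc4, show sSup {n | ∃ s : Finset V, G.IsIndepSet' s ∧ s.card = n} = 3 from hα]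
        at this
      omega
    have h3mem : 3 ∈ {n | ∃ s : Finset V, G.IsIndepSet' s ∧ s.card = n} := by
      have := Nat.sSup_mem hne hbdd
      rwa [show sSup {n | ∃ s : Finset V, G.IsIndepSet' s ∧ s.card = n} = 3 from hα]
        at this
    obtain ⟨s, hs, hcard⟩ := h3mem
    obtain ⟨a, b, c, hab, hac, hbc, rfl⟩ := Finset.card_eq_three.mp hcard
    have nab : ¬G.Adj a b := hs a (by simp) b (by simp) hab
    have nac : ¬G.Adj a c := hs a (by simp) c (by simp) hac
    have nbc : ¬G.Adj b c := hs b (by simp) c (by simp) hbc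
    by_cases hP5ex : ∃ y0 y1 y2 y3 y4 : V, G.Adj y0 y1 ∧ G.Adj y1 y2 ∧ G.Adj y2 y3 ∧
        G.Adj y3 y4 ∧ ¬G.Adj y0 y2 ∧ ¬G.Adj y0 y3 ∧ ¬G.Adj y0 y4 ∧ ¬G.Adj y1 y3 ∧
        ¬G.Adj y1 y4 ∧ ¬G.Adj y2 y4
    · obtain ⟨y0, y1, y2, y3, y4, p1, p2, p3, p4, q1, q2, q3, q4, q5, q6⟩ := hP5ex
      exact StmtThreeAux.caseP5 G h4 hC7 y0 y1 y2 y3 y4 p1 p2 p3 p4 q1 q2 q3 q4 q5 q6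
    · have hP5 : StmtThreeAux.NoP5 G := by
        intro y0 y1 y2 y3 y4 p1 p2 p3 p4 q1 q2 q3 q4 q5 q6
        exact hP5ex ⟨y0, y1, y2, y3, y4, p1, p2, p3, p4, q1, q2, q3, q4, q5, q6⟩
      exact StmtThreeAux.case_noP5 G hconn h4 hP5 a b c hab hac hbc nab nac nbc
  exact hgood
end

section
/- Let G be a finite simple graph on n vertices with independence number α(G) = 3 that contains no induced cycle C₇ on seven vertices. Then there exist pairwise disjoint nonempty vertex subsets B₁, …, B_k with k ≥ n/4 such that each B_i induces a connected subgraph of G and for every pair i ≠ j there is an edge of G joining a vertex of B_i to a vertex of B_j. -/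
namespace HadwigerC7

variable {V : Type*} {G : SimpleGraph V}

open SimpleGraph

def No4 (G : SimpleGraph V) : Prop :=
  ∀ a b c d : V, a ≠ b → a ≠ c → a ≠ d → b ≠ c → b ≠ d → c ≠ d →
  ¬G.Adj a b → ¬G.Adj a c → ¬G.Adj a d → ¬G.Adj b c → ¬G.Adj b d → ¬G.Adj c d → False

def Oracle (G : SimpleGraph V) (s : Finset V) : Prop :=
  ∀ a b c d : V, a ∈ s → b ∈ s → c ∈ s → d ∈ s → G.Adj a b → G.Adj b c → G.Adj c d →
  ∃ u, u ∈ s ∧ u ≠ a ∧ u ≠ b ∧ u ≠ c ∧ u ≠ d ∧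
    ¬G.Adj u a ∧ ¬G.Adj u b ∧ ¬G.Adj u c ∧ ¬G.Adj u d

def cc (t : ℕ) : ℕ := if t ≤ 1 then 1 else if t = 2 then 3 else 4

lemma reach_of_adj {s : Set V} {a b : V} (ha : a ∈ s) (hb : b ∈ s) (hab : G.Adj a b) :
    (G.induce s).Reachable ⟨a, ha⟩ ⟨b, hb⟩ :=
  SimpleGraph.Adj.reachable (by simp [hab])

lemma single_connected {a : V} {s : Set V} (ha : a ∈ s)
    (hcover : ∀ z ∈ s, z = a) : (G.induce s).Connected := by
  rw [SimpleGraph.connected_iff]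
  refine ⟨?_, ⟨⟨a, ha⟩⟩⟩
  rintro ⟨u, hu⟩ ⟨v, hv⟩
  have h1 := hcover u hu
  have h2 := hcover v hv
  subst h1; subst h2
  rfl

lemma chain3_connected {a b c : V} (hab : G.Adj a b) (hbc : G.Adj b c)
    {s : Set V} (ha : a ∈ s) (hb : b ∈ s) (hc : c ∈ s)
    (hcover : ∀ z ∈ s, z = a ∨ z = b ∨ z = c) :
    (G.induce s).Connected := by
  rw [SimpleGraph.connected_iff]
  refine ⟨?_, ⟨⟨a, ha⟩⟩⟩
  have key : ∀ w : s, (G.induce s).Reachable ⟨a, ha⟩ w := by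
    rintro ⟨w, hw⟩
    rcases hcover w hw with rfl | rfl | rfl
    · rfl
    · exact reach_of_adj ha hb hab
    · exact (reach_of_adj ha hb hab).trans (reach_of_adj hb hc hbc)
  intro u v
  exact (key u).symm.trans (key v)

lemma chain4_connected {a b c d : V} (hab : G.Adj a b) (hbc : G.Adj b c) (hcd : G.Adj c d)
    {s : Set V} (ha : a ∈ s) (hb : b ∈ s) (hc : c ∈ s) (hd : d ∈ s)
    (hcover : ∀ z ∈ s, z = a ∨ z = b ∨ z = c ∨ z = d) :
    (G.induce s).Connected := by
  rw [SimpleGraph.connected_iff]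
  refine ⟨?_, ⟨⟨a, ha⟩⟩⟩
  have key : ∀ w : s, (G.induce s).Reachable ⟨a, ha⟩ w := by
    rintro ⟨w, hw⟩
    rcases hcover w hw with rfl | rfl | rfl | rfl
    · rfl
    · exact reach_of_adj ha hb hab
    · exact (reach_of_adj ha hb hab).trans (reach_of_adj hb hc hbc)
    · exact ((reach_of_adj ha hb hab).trans (reach_of_adj hb hc hbc)).trans
        (reach_of_adj hc hd hcd)
  intro u v
  exact (key u).symm.trans (key v)

lemma exists_boundary {s : Set V} (hconn : (G.induce s).Connected)
    {X : Set V} (hXs : X ⊆ s) {a b : V} (ha : a ∈ X) (hb : b ∈ s) (hbX : b ∉ X) :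
    ∃ x ∈ X, ∃ m ∈ s, m ∉ X ∧ G.Adj x m := by
  obtain ⟨w⟩ := hconn.preconnected ⟨a, hXs ha⟩ ⟨b, hb⟩
  suffices H : ∀ (u v : s) (_ : (G.induce s).Walk u v), u.val ∈ X → v.val ∉ X →
      ∃ x ∈ X, ∃ m ∈ s, m ∉ X ∧ G.Adj x m by
    exact H _ _ w ha hbX
  intro u v wlk
  induction wlk with
  | nil => intro h h'; exact absurd h h'
  | @cons u' v' w' hadj p ih =>
      intro hu hw
      by_cases hm : v'.val ∈ X
      · exact ih hm hw
      · refine ⟨u'.val, hu, v'.val, v'.prop, hm, ?_⟩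
        simpa using hadj

lemma exists_induced_P3 {s : Set V} (hconn : (G.induce s).Connected)
    {A B : V} (hA : A ∈ s) (hB : B ∈ s) (hAB : A ≠ B) (hnadj : ¬G.Adj A B) :
    ∃ p ∈ s, ∃ q ∈ s, ∃ r ∈ s,
      G.Adj p q ∧ G.Adj q r ∧ ¬G.Adj p r ∧ p ≠ r := by
  set H := G.induce s with hH
  set X : ↥s := ⟨A, hA⟩
  set Y : ↥s := ⟨B, hB⟩
  have hXY : X ≠ Y := fun h => hAB (congrArg Subtype.val h)
  have hXYadj : ¬H.Adj X Y := by simpa [hH] using hnadj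
  have hdne : H.dist X Y ≠ 0 :=
    SimpleGraph.dist_ne_zero_iff_ne_and_reachable.mpr ⟨hXY, hconn.preconnected X Y⟩
  obtain ⟨p, hp⟩ := SimpleGraph.exists_walk_of_dist_ne_zero hdne
  have hd2 : 2 ≤ H.dist X Y := by
    by_contra hlt
    push_neg at hlt
    have h0 : H.dist X Y ≠ 0 := hdne
    have h1 : H.dist X Y = 1 := by omega
    exact hXYadj (SimpleGraph.dist_eq_one_iff_adj.mp h1)
  have hnp : ¬p.Nil := by
    rw [SimpleGraph.Walk.not_nil_iff_lt_length]
    omega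
  set C : ↥s := p.getVert 1 with hC
  have hXC : H.Adj X C := SimpleGraph.Walk.adj_snd hnp
  set q := p.tail with hq
  have hqlen : q.length + 1 = p.length := SimpleGraph.Walk.length_tail_add_one hnp
  have hnq : ¬q.Nil := by
    rw [SimpleGraph.Walk.not_nil_iff_lt_length]
    omega
  set E : ↥s := q.getVert 1 with hE
  have hCE : H.Adj C E := SimpleGraph.Walk.adj_snd hnq
  set rwalk := q.tail with hrw
  have hrlen : rwalk.length + 1 = q.length := SimpleGraph.Walk.length_tail_add_one hnq
  have hXE : ¬ H.Adj X E := by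
    intro hadj
    have hle : H.dist X Y ≤ (SimpleGraph.Walk.cons hadj rwalk).length := SimpleGraph.dist_le _
    rw [SimpleGraph.Walk.length_cons] at hle
    omega
  have hXEne : X ≠ E := by
    intro hEq
    have hle : H.dist X Y ≤ (rwalk.copy hEq.symm rfl).length := SimpleGraph.dist_le _
    rw [SimpleGraph.Walk.length_copy] at hle
    omega
  refine ⟨X.val, X.prop, C.val, C.prop, E.val, E.prop, ?_, ?_, ?_, ?_⟩
  · simpa [hH] using hXC
  · simpa [hH] using hCE
  · intro hadj
    exact hXE (by simpa [hH] using hadj)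
  · intro hval
    exact hXEne (Subtype.ext hval)

lemma zmod7cases : ∀ i : ZMod 7, i = 0 ∨ i = 1 ∨ i = 2 ∨ i = 3 ∨ i = 4 ∨ i = 5 ∨ i = 6 := by
  decide


lemma mkC7 (h7 : ¬G.HasInducedCycle 7) {a0 a1 a2 a3 a4 a5 a6 : V}
 (e01 : G.Adj a0 a1) (e12 : G.Adj a1 a2) (e23 : G.Adj a2 a3) (e34 : G.Adj a3 a4)
 (e45 : G.Adj a4 a5) (e56 : G.Adj a5 a6) (e60 : G.Adj a6 a0)
 (n02 : ¬G.Adj a0 a2) (n03 : ¬G.Adj a0 a3) (n04 : ¬G.Adj a0 a4) (n05 : ¬G.Adj a0 a5)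
 (n13 : ¬G.Adj a1 a3) (n14 : ¬G.Adj a1 a4) (n15 : ¬G.Adj a1 a5) (n16 : ¬G.Adj a1 a6)
 (n24 : ¬G.Adj a2 a4) (n25 : ¬G.Adj a2 a5) (n26 : ¬G.Adj a2 a6)
 (n35 : ¬G.Adj a3 a5) (n36 : ¬G.Adj a3 a6) (n46 : ¬G.Adj a4 a6)
 (d02 : a0 ≠ a2) (d03 : a0 ≠ a3) (d04 : a0 ≠ a4) (d05 : a0 ≠ a5)
 (d13 : a1 ≠ a3) (d14 : a1 ≠ a4) (d15 : a1 ≠ a5) (d16 : a1 ≠ a6)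
 (d24 : a2 ≠ a4) (d25 : a2 ≠ a5) (d26 : a2 ≠ a6)
 (d35 : a3 ≠ a5) (d36 : a3 ≠ a6) (d46 : a4 ≠ a6) :
 False := by
  apply h7
  have v0 : (fun i : ZMod 7 => ![a0,a1,a2,a3,a4,a5,a6] i) 0 = a0 := rfl
  have v1 : (fun i : ZMod 7 => ![a0,a1,a2,a3,a4,a5,a6] i) 1 = a1 := rfl
  have v2 : (fun i : ZMod 7 => ![a0,a1,a2,a3,a4,a5,a6] i) 2 = a2 := rfl
  have v3 : (fun i : ZMod 7 => ![a0,a1,a2,a3,a4,a5,a6] i) 3 = a3 := rfl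
  have v4 : (fun i : ZMod 7 => ![a0,a1,a2,a3,a4,a5,a6] i) 4 = a4 := rfl
  have v5 : (fun i : ZMod 7 => ![a0,a1,a2,a3,a4,a5,a6] i) 5 = a5 := rfl
  have v6 : (fun i : ZMod 7 => ![a0,a1,a2,a3,a4,a5,a6] i) 6 = a6 := rfl
  refine ⟨fun i => ![a0,a1,a2,a3,a4,a5,a6] i, ?_, ?_⟩
  · intro i j hf
    rcases zmod7cases i with rfl|rfl|rfl|rfl|rfl|rfl|rfl <;>
      rcases zmod7cases j with rfl|rfl|rfl|rfl|rfl|rfl|rfl <;>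
      simp only [v0,v1,v2,v3,v4,v5,v6] at hf <;>
      first
        | rfl
        | exact absurd hf e01.ne | exact absurd hf e01.ne.symm
        | exact absurd hf e12.ne | exact absurd hf e12.ne.symm
        | exact absurd hf e23.ne | exact absurd hf e23.ne.symm
        | exact absurd hf e34.ne | exact absurd hf e34.ne.symm
        | exact absurd hf e45.ne | exact absurd hf e45.ne.symm
        | exact absurd hf e56.ne | exact absurd hf e56.ne.symm
        | exact absurd hf e60.ne | exact absurd hf e60.ne.symm
        | exact absurd hf d02 | exact absurd hf d02.symm
        | exact absurd hf d03 | exact absurd hf d03.symm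
        | exact absurd hf d04 | exact absurd hf d04.symm
        | exact absurd hf d05 | exact absurd hf d05.symm
        | exact absurd hf d13 | exact absurd hf d13.symm
        | exact absurd hf d14 | exact absurd hf d14.symm
        | exact absurd hf d15 | exact absurd hf d15.symm
        | exact absurd hf d16 | exact absurd hf d16.symm
        | exact absurd hf d24 | exact absurd hf d24.symm
        | exact absurd hf d25 | exact absurd hf d25.symm
        | exact absurd hf d26 | exact absurd hf d26.symm
        | exact absurd hf d35 | exact absurd hf d35.symm
        | exact absurd hf d36 | exact absurd hf d36.symm
        | exact absurd hf d46 | exact absurd hf d46.symm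
  · intro i j
    rcases zmod7cases i with rfl|rfl|rfl|rfl|rfl|rfl|rfl <;>
      rcases zmod7cases j with rfl|rfl|rfl|rfl|rfl|rfl|rfl <;>
      simp only [v0,v1,v2,v3,v4,v5,v6] <;>
      first
        | exact iff_of_true e01 (by decide) | exact iff_of_true e01.symm (by decide)
        | exact iff_of_true e12 (by decide) | exact iff_of_true e12.symm (by decide)
        | exact iff_of_true e23 (by decide) | exact iff_of_true e23.symm (by decide)
        | exact iff_of_true e34 (by decide) | exact iff_of_true e34.symm (by decide)
        | exact iff_of_true e45 (by decide) | exact iff_of_true e45.symm (by decide)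
        | exact iff_of_true e56 (by decide) | exact iff_of_true e56.symm (by decide)
        | exact iff_of_true e60 (by decide) | exact iff_of_true e60.symm (by decide)
        | exact iff_of_false (G.irrefl) (by decide)
        | exact iff_of_false n02 (by decide) | exact iff_of_false (fun h => n02 (G.adj_symm h)) (by decide)
        | exact iff_of_false n03 (by decide) | exact iff_of_false (fun h => n03 (G.adj_symm h)) (by decide)
        | exact iff_of_false n04 (by decide) | exact iff_of_false (fun h => n04 (G.adj_symm h)) (by decide)
        | exact iff_of_false n05 (by decide) | exact iff_of_false (fun h => n05 (G.adj_symm h)) (by decide)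
        | exact iff_of_false n13 (by decide) | exact iff_of_false (fun h => n13 (G.adj_symm h)) (by decide)
        | exact iff_of_false n14 (by decide) | exact iff_of_false (fun h => n14 (G.adj_symm h)) (by decide)
        | exact iff_of_false n15 (by decide) | exact iff_of_false (fun h => n15 (G.adj_symm h)) (by decide)
        | exact iff_of_false n16 (by decide) | exact iff_of_false (fun h => n16 (G.adj_symm h)) (by decide)
        | exact iff_of_false n24 (by decide) | exact iff_of_false (fun h => n24 (G.adj_symm h)) (by decide)
        | exact iff_of_false n25 (by decide) | exact iff_of_false (fun h => n25 (G.adj_symm h)) (by decide)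
        | exact iff_of_false n26 (by decide) | exact iff_of_false (fun h => n26 (G.adj_symm h)) (by decide)
        | exact iff_of_false n35 (by decide) | exact iff_of_false (fun h => n35 (G.adj_symm h)) (by decide)
        | exact iff_of_false n36 (by decide) | exact iff_of_false (fun h => n36 (G.adj_symm h)) (by decide)
        | exact iff_of_false n46 (by decide) | exact iff_of_false (fun h => n46 (G.adj_symm h)) (by decide)

lemma iib (h4 : No4 G) (h7 : ¬G.HasInducedCycle 7) {s : Finset V}
    (ow : Oracle G s) {p q r x m : V}
    (hp : p ∈ s) (hq : q ∈ s) (hr : r ∈ s) (hx : x ∈ s) (hm : m ∈ s)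
    (epq : G.Adj p q) (eqr : G.Adj q r) (npr : ¬G.Adj p r) (dpr : p ≠ r)
    (nxp : ¬G.Adj x p) (nxq : ¬G.Adj x q) (nxr : ¬G.Adj x r)
    (dxp : x ≠ p) (dxq : x ≠ q) (dxr : x ≠ r)
    (exm : G.Adj x m) (emp : G.Adj m p) (nmq : ¬G.Adj m q) (nmr : ¬G.Adj m r) : False := by
  have dmq : m ≠ q := fun h => nxq (h ▸ exm)
  have dmr : m ≠ r := fun h => nxr (h ▸ exm)
  have dmp : m ≠ p := emp.ne
  have dqp : q ≠ p := epq.ne'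
  have dqr : q ≠ r := eqr.ne
  obtain ⟨w, hws, dwx, dwm, dwp, dwq, nwx, nwm, nwp, nwq⟩ :=
    ow x m p q hx hm hp hq exm emp epq
  have dwr : w ≠ r := fun h => (h ▸ nwq) eqr.symm
  have ewr : G.Adj w r := by
    by_contra nwr
    exact h4 w x p r dwx dwp dwr dxp dxr dpr nwx nwp nwr nxp nxr npr
  obtain ⟨y, hys, dym, dyp, dyq, dyr, nym, nyp, nyq, nyr⟩ :=
    ow m p q r hm hp hq hr emp epq eqr
  have dyx : y ≠ x := fun h => (h ▸ nym) exm
  have eyx : G.Adj y x := by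
    by_contra nyx
    exact h4 y x p r dyx dyp dyr dxp dxr dpr nyx nyp nyr nxp nxr npr
  have dwy : w ≠ y := fun h => (h ▸ nyr : ¬G.Adj w r) ewr
  have ewy : G.Adj w y := by
    by_contra nwy
    exact h4 w y m q dwy dwm dwq dym dyq dmq nwy nwm nwq nym nyq nmq
  exact mkC7 h7 exm.symm eyx.symm ewy.symm ewr eqr.symm epq.symm emp.symm
    (fun h => nym h.symm) (fun h => nwm h.symm) nmr nmq
    (fun h => nwx h.symm) nxr nxq nxp
    nyr nyq nyp
    nwq nwp
    (fun h => npr h.symm)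
    dym.symm dwm.symm dmr dmq
    dwx.symm dxr dxq dxp
    dyr dyq dyp
    dwq dwp
    dpr.symm

lemma cds (h4 : No4 G) (h7 : ¬G.HasInducedCycle 7) (s : Finset V) (hs : s.Nonempty)
    (hconn : (G.induce (↑s : Set V)).Connected) (t : ℕ) (ht3 : t ≤ 3)
    (hind : ∀ I : Finset V, I ⊆ s → G.IsIndepSet' I → I.card ≤ t) :
    ∃ D : Finset V, D ⊆ s ∧ D.Nonempty ∧ (G.induce (↑D : Set V)).Connected ∧
      (∀ v ∈ s, v ∈ D ∨ ∃ d ∈ D, G.Adj v d) ∧ D.card ≤ cc t := by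
  classical
  by_cases hclq : ∀ a ∈ s, ∀ b ∈ s, a ≠ b → G.Adj a b
  · obtain ⟨a, ha⟩ := hs
    refine ⟨{a}, by simpa using ha, ⟨a, by simp⟩, ?_, ?_, ?_⟩
    · exact single_connected (show a ∈ (↑({a} : Finset V) : Set V) by simp)
        (by intro z hz; simpa using hz)
    · intro v hv
      by_cases hva : v = a
      · exact Or.inl (by simp [hva])
      · exact Or.inr ⟨a, by simp, hclq v hv a ha hva⟩
    · have : cc t = 1 ∨ cc t = 3 ∨ cc t = 4 := by unfold cc; split_ifs <;> simp
      rcases this with h | h | h <;> simp [h]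
  · push_neg at hclq
    obtain ⟨A, hA, B, hB, hABne, hABnadj⟩ := hclq
    obtain ⟨p, hp, q, hq, r, hr, epq, eqr, npr, dpr⟩ :=
      exists_induced_P3 hconn (Finset.mem_coe.mpr hA) (Finset.mem_coe.mpr hB) hABne hABnadj
    rw [Finset.mem_coe] at hp hq hr
    have ht2 : 2 ≤ t := by
      have hI : G.IsIndepSet' {A, B} := by
        intro a ha b hb hab
        simp only [Finset.mem_insert, Finset.mem_singleton] at ha hb
        rcases ha with rfl | rfl <;> rcases hb with rfl | rfl
        · exact absurd rfl hab
        · exact hABnadj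
        · exact fun h => hABnadj h.symm
        · exact absurd rfl hab
      have := hind {A, B} (by
        intro z hz
        simp only [Finset.mem_insert, Finset.mem_singleton] at hz
        rcases hz with rfl | rfl <;> assumption) hI
      rwa [Finset.card_insert_of_notMem (by simpa using hABne), Finset.card_singleton] at this
    have hcc3 : 3 ≤ cc t := by unfold cc; split_ifs <;> omega
    by_contra hno
    push_neg at hno
    have ow3 : ∀ a b c : V, a ∈ s → b ∈ s → c ∈ s → G.Adj a b → G.Adj b c →
        ∃ u, u ∈ s ∧ u ≠ a ∧ u ≠ b ∧ u ≠ c ∧ ¬G.Adj u a ∧ ¬G.Adj u b ∧ ¬G.Adj u c := by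
      intro a b c ha hb hc hab hbc
      have hsub : ({a,b,c} : Finset V) ⊆ s := by
        intro z hz
        simp only [Finset.mem_insert, Finset.mem_singleton] at hz
        rcases hz with rfl | rfl | rfl <;> assumption
      have hcard : ({a,b,c} : Finset V).card ≤ 3 :=
        le_trans (Finset.card_insert_le _ _) (by
          have := Finset.card_insert_le b ({c} : Finset V)
          simp only [Finset.card_singleton] at this
          omega)
      have hconn3 : (G.induce (↑({a,b,c} : Finset V) : Set V)).Connected :=
        chain3_connected hab hbc (by simp) (by simp) (by simp)
          (by intro z hz; simpa using hz)
      have hdom := hno {a,b,c} hsub ⟨a, by simp⟩ hconn3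
      have hnd : ¬ (∀ v ∈ s, v ∈ ({a,b,c} : Finset V) ∨ ∃ d ∈ ({a,b,c} : Finset V), G.Adj v d) := by
        intro hd
        have := hdom hd
        omega
      push_neg at hnd
      obtain ⟨u, hus, hu1, hu2⟩ := hnd
      simp only [Finset.mem_insert, Finset.mem_singleton, not_or] at hu1
      refine ⟨u, hus, hu1.1, hu1.2.1, hu1.2.2, ?_, ?_, ?_⟩
      · exact fun h => hu2 a (by simp) h
      · exact fun h => hu2 b (by simp) h
      · exact fun h => hu2 c (by simp) h
    by_cases ht2' : t = 2
    · subst ht2'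
      obtain ⟨x₀, hx₀s, dx₀p, dx₀q, dx₀r, nx₀p, nx₀q, nx₀r⟩ := ow3 p q r hp hq hr epq eqr
      have hI : G.IsIndepSet' {x₀, p, r} := by
        intro a ha b hb hab
        simp only [Finset.mem_insert, Finset.mem_singleton] at ha hb
        rcases ha with rfl | rfl | rfl <;> rcases hb with rfl | rfl | rfl <;>
          first
            | exact absurd rfl hab
            | exact nx₀p | exact nx₀r | exact npr
            | exact fun h => nx₀p h.symm | exact fun h => nx₀r h.symm
            | exact fun h => npr h.symm
      have hle := hind {x₀, p, r} (by
        intro z hz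
        simp only [Finset.mem_insert, Finset.mem_singleton] at hz
        rcases hz with rfl | rfl | rfl <;> assumption) hI
      rw [Finset.card_insert_of_notMem (by simp [dx₀p, dx₀r]),
        Finset.card_insert_of_notMem (by simpa using dpr), Finset.card_singleton] at hle
      omega
    · have ht3' : t = 3 := by omega
      subst ht3'
      have ow4 : Oracle G s := by
        intro a b c d ha hb hc hd hab hbc hcd
        have hsub : ({a,b,c,d} : Finset V) ⊆ s := by
          intro z hz
          simp only [Finset.mem_insert, Finset.mem_singleton] at hz
          rcases hz with rfl | rfl | rfl | rfl <;> assumption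
        have hcard : ({a,b,c,d} : Finset V).card ≤ 4 := by
          refine le_trans (Finset.card_insert_le _ _) ?_
          have h1 := Finset.card_insert_le b ({c, d} : Finset V)
          have h2 := Finset.card_insert_le c ({d} : Finset V)
          simp only [Finset.card_singleton] at h2
          omega
        have hconn4 : (G.induce (↑({a,b,c,d} : Finset V) : Set V)).Connected :=
          chain4_connected hab hbc hcd (by simp) (by simp) (by simp) (by simp)
            (by intro z hz; simpa using hz)
        have hdom := hno {a,b,c,d} hsub ⟨a, by simp⟩ hconn4
        have hnd : ¬ (∀ v ∈ s, v ∈ ({a,b,c,d} : Finset V) ∨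
            ∃ e ∈ ({a,b,c,d} : Finset V), G.Adj v e) := by
          intro hd'
          have := hdom hd'
          have hcc4 : cc 3 = 4 := by unfold cc; norm_num
          omega
        push_neg at hnd
        obtain ⟨u, hus, hu1, hu2⟩ := hnd
        simp only [Finset.mem_insert, Finset.mem_singleton, not_or] at hu1
        refine ⟨u, hus, hu1.1, hu1.2.1, hu1.2.2.1, hu1.2.2.2, ?_, ?_, ?_, ?_⟩
        · exact fun h => hu2 a (by simp) h
        · exact fun h => hu2 b (by simp) h
        · exact fun h => hu2 c (by simp) h
        · exact fun h => hu2 d (by simp) h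
      obtain ⟨x₁, hx₁s, dx₁p, dx₁q, dx₁r, nx₁p, nx₁q, nx₁r⟩ := ow3 p q r hp hq hr epq eqr
      set X : Finset V := s.filter
        (fun v => ¬G.Adj v p ∧ ¬G.Adj v q ∧ ¬G.Adj v r ∧ v ≠ p ∧ v ≠ q ∧ v ≠ r) with hX
      have hx₁X : x₁ ∈ X := by
        rw [hX, Finset.mem_filter]
        exact ⟨hx₁s, nx₁p, nx₁q, nx₁r, dx₁p, dx₁q, dx₁r⟩
      have hpX : p ∉ X := by
        rw [hX, Finset.mem_filter]
        rintro ⟨-, -, -, -, h, -⟩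
        exact h rfl
      obtain ⟨x, hxX, m, hms, hmX, exm⟩ :=
        exists_boundary hconn (X := (↑X : Set V))
          (by intro z hz; rw [Finset.mem_coe, hX, Finset.mem_filter] at hz
              exact Finset.mem_coe.mpr hz.1)
          (Finset.mem_coe.mpr hx₁X) (Finset.mem_coe.mpr hp)
          (fun h => hpX (Finset.mem_coe.mp h))
      rw [Finset.mem_coe] at hms
      have hmX' : m ∉ X := fun h => hmX (Finset.mem_coe.mpr h)
      rw [Finset.mem_coe, hX, Finset.mem_filter] at hxX
      obtain ⟨hxs, nxp, nxq, nxr, dxp, dxq, dxr⟩ := hxX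
      have dmp : m ≠ p := fun h => nxp (h ▸ exm)
      have dmq : m ≠ q := fun h => nxq (h ▸ exm)
      have dmr : m ≠ r := fun h => nxr (h ▸ exm)
      have hmtrace : G.Adj m p ∨ G.Adj m q ∨ G.Adj m r := by
        by_contra hcon
        push_neg at hcon
        obtain ⟨h1, h2, h3⟩ := hcon
        apply hmX'
        rw [hX, Finset.mem_filter]
        exact ⟨hms, h1, h2, h3, dmp, dmq, dmr⟩
      by_cases hmq : G.Adj m q
      · -- u' from chain x–m–q–p
        obtain ⟨u', hu's, du'x, du'm, du'q, du'p, nu'x, nu'm, nu'q, nu'p⟩ :=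
          ow4 x m q p hxs hms hq hp exm hmq epq.symm
        have du'r : u' ≠ r := fun h => (h ▸ nu'q) eqr.symm
        have eu'r : G.Adj u' r := by
          by_contra nu'r
          exact h4 u' x p r du'x du'p du'r dxp dxr dpr nu'x nu'p nu'r nxp nxr npr
        by_cases hmr : G.Adj m r
        · obtain ⟨u'', hu''s, du''x, du''m, du''q, du''r, nu''x, nu''m, nu''q, nu''r⟩ :=
            ow4 x m q r hxs hms hq hr exm hmq eqr
          have du''p : u'' ≠ p := fun h => (h ▸ nu''q) epq
          have eu''p : G.Adj u'' p := by
            by_contra nu''p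
            exact h4 u'' x r p du''x du''r du''p dxr dxp dpr.symm
              nu''x nu''r nu''p nxr nxp (fun h => npr h.symm)
          have du'u'' : u' ≠ u'' := fun h => nu''r (h ▸ eu'r)
          have eu'u'' : G.Adj u' u'' := by
            by_contra nuu
            exact h4 u' u'' x q du'u'' du'x du'q du''x du''q dxq
              nuu nu'x nu'q nu''x nu''q nxq
          exact iib h4 h7 ow4 hr hu's hu''s hxs hms
            eu'r.symm eu'u'' (fun h => nu''r h.symm) du''r.symm
            nxr (fun h => nu'x h.symm) (fun h => nu''x h.symm)
            dxr du'x.symm du''x.symm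
            exm hmr (fun h => nu'm h.symm) (fun h => nu''m h.symm)
        · exact iib h4 h7 ow4 hq hr hu's hxs hms
            eqr eu'r.symm (fun h => nu'q h.symm) du'q.symm
            nxq nxr (fun h => nu'x h.symm)
            dxq dxr du'x.symm
            exm hmq hmr (fun h => nu'm h.symm)
      · by_cases hmp : G.Adj m p
        · by_cases hmr : G.Adj m r
          · -- trace {p, r}
            obtain ⟨u', hu's, du'x, du'm, du'p, du'q, nu'x, nu'm, nu'p, nu'q⟩ :=
              ow4 x m p q hxs hms hp hq exm hmp epq
            have du'r : u' ≠ r := fun h => (h ▸ nu'q) eqr.symm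
            have eu'r : G.Adj u' r := by
              by_contra nu'r
              exact h4 u' x p r du'x du'p du'r dxp dxr dpr nu'x nu'p nu'r nxp nxr npr
            obtain ⟨u'', hu''s, du''x, du''m, du''r, du''q, nu''x, nu''m, nu''r, nu''q⟩ :=
              ow4 x m r q hxs hms hr hq exm hmr eqr.symm
            have du''p : u'' ≠ p := fun h => (h ▸ nu''q) epq
            have eu''p : G.Adj u'' p := by
              by_contra nu''p
              exact h4 u'' x r p du''x du''r du''p dxr dxp dpr.symm
                nu''x nu''r nu''p nxr nxp (fun h => npr h.symm)
            have du'u'' : u' ≠ u'' := fun h => nu''r (h ▸ eu'r)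
            have eu'u'' : G.Adj u' u'' := by
              by_contra nuu
              exact h4 u' u'' x q du'u'' du'x du'q du''x du''q dxq
                nuu nu'x nu'q nu''x nu''q nxq
            exact iib h4 h7 ow4 hr hu's hu''s hxs hms
              eu'r.symm eu'u'' (fun h => nu''r h.symm) du''r.symm
              nxr (fun h => nu'x h.symm) (fun h => nu''x h.symm)
              dxr du'x.symm du''x.symm
              exm hmr (fun h => nu'm h.symm) (fun h => nu''m h.symm)
          · -- trace exactly {p}
            exact iib h4 h7 ow4 hp hq hr hxs hms
              epq eqr npr dpr nxp nxq nxr dxp dxq dxr exm hmp hmq hmr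
        · -- trace exactly {r}
          have hmr : G.Adj m r := by tauto
          exact iib h4 h7 ow4 hr hq hp hxs hms
            eqr.symm epq.symm (fun h => npr h.symm) dpr.symm
            nxr nxq nxp dxr dxq dxp exm hmr hmq hmp


lemma main (h4 : No4 G) (h7 : ¬G.HasInducedCycle 7) :
    ∀ n : ℕ, ∀ s : Finset V, s.card = n → ∀ t : ℕ, t ≤ 3 →
    (∀ I : Finset V, I ⊆ s → G.IsIndepSet' I → I.card ≤ t) →
    ∃ (k : ℕ) (B : Fin k → Finset V),
      (∀ i, B i ⊆ s) ∧ (∀ i, (B i).Nonempty) ∧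
      (∀ i j, i ≠ j → Disjoint (B i) (B j)) ∧
      (∀ i, (G.induce (↑(B i) : Set V)).Connected) ∧
      (∀ i j, i ≠ j → ∃ a ∈ B i, ∃ b ∈ B j, G.Adj a b) ∧
      s.card ≤ k * cc t := by
  intro n
  induction n using Nat.strong_induction_on with
  | _ n ih =>
    intro s hcard t ht3 hind
    classical
    rcases Finset.eq_empty_or_nonempty s with rfl | hs
    · exact ⟨0, Fin.elim0, fun i => i.elim0, fun i => i.elim0, fun i _ => i.elim0,
        fun i => i.elim0, fun i _ => i.elim0, by simp⟩
    by_cases hconn : (G.induce (↑s : Set V)).Connected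
    · obtain ⟨D, hDs, hDne, hDconn, hDdom, hDcard⟩ := cds h4 h7 s hs hconn t ht3 hind
      have hslt : (s \ D).card < n := by
        rw [← hcard]
        apply Finset.card_lt_card
        rw [Finset.ssubset_iff_of_subset Finset.sdiff_subset]
        obtain ⟨d, hd⟩ := hDne
        exact ⟨d, hDs hd, by simp [hd]⟩
      obtain ⟨k', B', hB's, hB'ne, hB'dis, hB'conn, hB'adj, hB'card⟩ :=
        ih (s \ D).card hslt (s \ D) rfl t ht3
          (fun I hI hII => hind I (hI.trans Finset.sdiff_subset) hII)
      have hdisDB : ∀ j', Disjoint D (B' j') := by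
        intro j'
        rw [Finset.disjoint_left]
        intro a haD haB
        exact (Finset.mem_sdiff.mp (hB's j' haB)).2 haD
      refine ⟨k' + 1, Fin.cons D B', ?_, ?_, ?_, ?_, ?_, ?_⟩
      · intro i
        rcases Fin.eq_zero_or_eq_succ i with rfl | ⟨i', rfl⟩
        · simpa using hDs
        · simp only [Fin.cons_succ]
          exact (hB's i').trans Finset.sdiff_subset
      · intro i
        rcases Fin.eq_zero_or_eq_succ i with rfl | ⟨i', rfl⟩
        · simpa using hDne
        · simpa using hB'ne i'
      · intro i j hij
        rcases Fin.eq_zero_or_eq_succ i with rfl | ⟨i', rfl⟩ <;>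
          rcases Fin.eq_zero_or_eq_succ j with rfl | ⟨j', rfl⟩
        · exact absurd rfl hij
        · simp only [Fin.cons_zero, Fin.cons_succ]
          exact hdisDB j'
        · simp only [Fin.cons_zero, Fin.cons_succ]
          exact (hdisDB i').symm
        · simp only [Fin.cons_succ]
          exact hB'dis i' j' (fun h => hij (by rw [h]))
      · intro i
        rcases Fin.eq_zero_or_eq_succ i with rfl | ⟨i', rfl⟩
        · exact hDconn
        · exact hB'conn i'
      · intro i j hij
        rcases Fin.eq_zero_or_eq_succ i with rfl | ⟨i', rfl⟩ <;>
          rcases Fin.eq_zero_or_eq_succ j with rfl | ⟨j', rfl⟩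
        · exact absurd rfl hij
        · obtain ⟨b, hb⟩ := hB'ne j'
          obtain ⟨hbs, hbD⟩ := Finset.mem_sdiff.mp (hB's j' hb)
          rcases hDdom b hbs with hbD' | ⟨d, hd, hadj⟩
          · exact absurd hbD' hbD
          · exact ⟨d, by simpa using hd, b, by simpa using hb, hadj.symm⟩
        · obtain ⟨b, hb⟩ := hB'ne i'
          obtain ⟨hbs, hbD⟩ := Finset.mem_sdiff.mp (hB's i' hb)
          rcases hDdom b hbs with hbD' | ⟨d, hd, hadj⟩
          · exact absurd hbD' hbD
          · exact ⟨b, by simpa using hb, d, by simpa using hd, hadj⟩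
        · simp only [Fin.cons_succ]
          exact hB'adj i' j' (fun h => hij (by rw [h]))
      · have h1 : D.card ≤ s.card := Finset.card_le_card hDs
        have h2 : s.card = (s \ D).card + D.card := by
          rw [Finset.card_sdiff_of_subset hDs]
          omega
        calc s.card = (s \ D).card + D.card := h2
          _ ≤ k' * cc t + cc t := add_le_add hB'card hDcard
          _ = (k' + 1) * cc t := by ring
    · rw [SimpleGraph.connected_iff] at hconn
      push_neg at hconn
      obtain ⟨a₀, ha₀⟩ := hs
      have hne' : Nonempty (↑(↑s : Set V)) := ⟨⟨a₀, Finset.mem_coe.mpr ha₀⟩⟩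
      have hnp : ¬(G.induce (↑s : Set V)).Preconnected := fun h => (hconn h).false hne'.some
      rw [SimpleGraph.Preconnected] at hnp
      push_neg at hnp
      obtain ⟨A, B, hnr⟩ := hnp
      classical
      set s₁ : Finset V := s.filter
        (fun v => ∃ h : v ∈ (↑s : Set V), (G.induce (↑s : Set V)).Reachable A ⟨v, h⟩) with hs₁
      set s₂ := s \ s₁ with hs₂
      have hA1 : A.val ∈ s₁ := by
        rw [hs₁, Finset.mem_filter]
        exact ⟨Finset.mem_coe.mp A.prop, A.prop, SimpleGraph.Reachable.refl _⟩
      have hB2 : B.val ∈ s₂ := by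
        rw [hs₂, Finset.mem_sdiff]
        refine ⟨Finset.mem_coe.mp B.prop, ?_⟩
        intro hBmem
        rw [hs₁, Finset.mem_filter] at hBmem
        obtain ⟨-, h', hreach⟩ := hBmem
        exact hnr hreach
      have hs₁sub : s₁ ⊆ s := by rw [hs₁]; exact Finset.filter_subset _ _
      have hs₂sub : s₂ ⊆ s := by rw [hs₂]; exact Finset.sdiff_subset
      have hcross : ∀ u ∈ s₁, ∀ v ∈ s₂, ¬G.Adj u v := by
        intro u hu v hv hadj
        rw [hs₁, Finset.mem_filter] at hu
        obtain ⟨hus, hu', hreach⟩ := hu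
        rw [hs₂, Finset.mem_sdiff] at hv
        obtain ⟨hvs, hv1⟩ := hv
        apply hv1
        rw [hs₁, Finset.mem_filter]
        exact ⟨hvs, Finset.mem_coe.mpr hvs,
          hreach.trans (reach_of_adj hu' (Finset.mem_coe.mpr hvs) hadj)⟩
      have hdis12 : Disjoint s₁ s₂ := by
        rw [hs₂]
        exact Finset.disjoint_sdiff
      have hcard1lt : s₁.card < n := by
        rw [← hcard]
        apply Finset.card_lt_card
        rw [Finset.ssubset_iff_of_subset hs₁sub]
        refine ⟨B.val, Finset.mem_coe.mp B.prop, ?_⟩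
        intro hBmem
        exact (Finset.mem_sdiff.mp hB2).2 hBmem
      have hcard2lt : s₂.card < n := by
        rw [← hcard]
        apply Finset.card_lt_card
        rw [Finset.ssubset_iff_of_subset hs₂sub]
        exact ⟨A.val, Finset.mem_coe.mp A.prop, fun h => (Finset.mem_sdiff.mp h).2 hA1⟩
      -- maximum independent set size within s₂
      set P := (s₂.powerset).filter (fun I => G.IsIndepSet' I) with hP
      have hPne : P.Nonempty := ⟨∅, by
        rw [hP, Finset.mem_filter]
        exact ⟨by simp, by intro a ha; exact absurd ha (by simp)⟩⟩
      obtain ⟨I₂, hI₂P, hI₂max⟩ := Finset.exists_mem_eq_sup P hPne Finset.card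
      set t₂ := P.sup Finset.card with ht₂def
      rw [hP, Finset.mem_filter, Finset.mem_powerset] at hI₂P
      obtain ⟨hI₂sub, hI₂ind⟩ := hI₂P
      have hindunion : ∀ I : Finset V, I ⊆ s₁ → G.IsIndepSet' I →
          G.IsIndepSet' (I ∪ I₂) ∧ (I ∪ I₂).card = I.card + I₂.card ∧ I ∪ I₂ ⊆ s := by
        intro I hIsub hIind
        have hdisj : Disjoint I I₂ :=
          Finset.disjoint_of_subset_left hIsub (Finset.disjoint_of_subset_right hI₂sub hdis12)
        refine ⟨?_, Finset.card_union_of_disjoint hdisj, ?_⟩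
        · intro a ha b hb hab
          rw [Finset.mem_union] at ha hb
          rcases ha with ha | ha <;> rcases hb with hb | hb
          · exact hIind a ha b hb hab
          · exact hcross a (hIsub ha) b (hI₂sub hb)
          · exact fun h => hcross b (hIsub hb) a (hI₂sub ha) h.symm
          · exact hI₂ind a ha b hb hab
        · intro z hz
          rw [Finset.mem_union] at hz
          rcases hz with hz | hz
          · exact hs₁sub (hIsub hz)
          · exact hs₂sub (hI₂sub hz)
      have hind2 : ∀ I : Finset V, I ⊆ s₂ → G.IsIndepSet' I → I.card ≤ t₂ := by
        intro I hIsub hIind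
        refine Finset.le_sup ?_
        rw [hP, Finset.mem_filter, Finset.mem_powerset]
        exact ⟨hIsub, hIind⟩
      have ht₂I : t₂ = I₂.card := hI₂max
      have ht₂le : t₂ ≤ t := by
        rw [ht₂I]
        exact hind I₂ (hI₂sub.trans hs₂sub) hI₂ind
      have hsingleind : ∀ v : V, G.IsIndepSet' {v} := by
        intro v a ha b hb hab
        simp only [Finset.mem_singleton] at ha hb
        subst ha; subst hb
        exact absurd rfl hab
      have ht₂pos : 1 ≤ t₂ := by
        have := hind2 {B.val} (by simpa using hB2) (hsingleind _)
        simpa using this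
      have ht₁pos : 1 ≤ t - t₂ := by
        obtain ⟨hu_ind, hu_card, hu_sub⟩ := hindunion {A.val} (by simpa using hA1) (hsingleind _)
        have := hind _ hu_sub hu_ind
        rw [hu_card] at this
        simp only [Finset.card_singleton] at this
        omega
      have hind1 : ∀ I : Finset V, I ⊆ s₁ → G.IsIndepSet' I → I.card ≤ t - t₂ := by
        intro I hIsub hIind
        obtain ⟨hu_ind, hu_card, hu_sub⟩ := hindunion I hIsub hIind
        have := hind _ hu_sub hu_ind
        rw [hu_card, ← ht₂I] at this
        omega
      obtain ⟨k₁, B₁, hB₁s, hB₁ne, hB₁dis, hB₁conn, hB₁adj, hB₁card⟩ :=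
        ih s₁.card hcard1lt s₁ rfl (t - t₂) (by omega) hind1
      obtain ⟨k₂, B₂, hB₂s, hB₂ne, hB₂dis, hB₂conn, hB₂adj, hB₂card⟩ :=
        ih s₂.card hcard2lt s₂ rfl t₂ (by omega) hind2
      have hccsum : cc (t - t₂) + cc t₂ ≤ cc t := by
        unfold cc
        split_ifs <;> omega
      have hcards : s.card = s₁.card + s₂.card := by
        rw [hs₂, Finset.card_sdiff_of_subset hs₁sub]
        have := Finset.card_le_card hs₁sub
        omega
      rcases le_total k₁ k₂ with hk | hk
      · refine ⟨k₂, B₂, fun i => (hB₂s i).trans hs₂sub, hB₂ne, hB₂dis, hB₂conn, hB₂adj, ?_⟩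
        calc s.card = s₁.card + s₂.card := hcards
          _ ≤ k₁ * cc (t - t₂) + k₂ * cc t₂ := add_le_add hB₁card hB₂card
          _ ≤ k₂ * cc (t - t₂) + k₂ * cc t₂ :=
              Nat.add_le_add_right (Nat.mul_le_mul_right _ hk) _
          _ = k₂ * (cc (t - t₂) + cc t₂) := by ring
          _ ≤ k₂ * cc t := Nat.mul_le_mul_left _ hccsum
      · refine ⟨k₁, B₁, fun i => (hB₁s i).trans hs₁sub, hB₁ne, hB₁dis, hB₁conn, hB₁adj, ?_⟩
        calc s.card = s₁.card + s₂.card := hcards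
          _ ≤ k₁ * cc (t - t₂) + k₂ * cc t₂ := add_le_add hB₁card hB₂card
          _ ≤ k₁ * cc (t - t₂) + k₁ * cc t₂ :=
              Nat.add_le_add_left (Nat.mul_le_mul_right _ hk) _
          _ = k₁ * (cc (t - t₂) + cc t₂) := by ring
          _ ≤ k₁ * cc t := Nat.mul_le_mul_left _ hccsum

end HadwigerC7

/-- **Corollary to Theorem 2.** If `G` is a finite simple graph on `n` vertices with
independence number 3 and no induced `C₇`, then there are at least `n/4` pairwise disjoint
nonempty connected vertex subsets, every two of which are joined by an edge. -/
theorem stmt_4 {V : Type*} [Fintype V] (G : SimpleGraph V)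
    (hα : G.indepNum' = 3) (hC7 : ¬ G.HasInducedCycle 7) :
    ∃ (k : ℕ) (B : Fin k → Set V),
      (∀ i, (B i).Nonempty) ∧
      (∀ i j, i ≠ j → Disjoint (B i) (B j)) ∧
      (∀ i, (G.induce (B i)).Connected) ∧
      (∀ i j, i ≠ j → ∃ a ∈ B i, ∃ b ∈ B j, G.Adj a b) ∧
      (Fintype.card V : ℝ) / 4 ≤ (k : ℝ) := by
  classical
  have hbdd : BddAbove {n | ∃ s : Finset V, G.IsIndepSet' s ∧ s.card = n} := by
    refine ⟨Fintype.card V, ?_⟩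
    rintro n ⟨s, -, rfl⟩
    exact Finset.card_le_univ s
  have h4 : HadwigerC7.No4 G := by
    intro a b c d dab dac dad dbc dbd dcd nab nac nad nbc nbd ncd
    have hI : G.IsIndepSet' {a, b, c, d} := by
      intro u hu v hv huv
      simp only [Finset.mem_insert, Finset.mem_singleton] at hu hv
      rcases hu with rfl | rfl | rfl | rfl <;> rcases hv with rfl | rfl | rfl | rfl <;>
        first
          | exact absurd rfl huv
          | assumption
          | exact fun h => nab h.symm
          | exact fun h => nac h.symm
          | exact fun h => nad h.symm
          | exact fun h => nbc h.symm
          | exact fun h => nbd h.symm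
          | exact fun h => ncd h.symm
    have hcard : ({a, b, c, d} : Finset V).card = 4 := by
      rw [Finset.card_insert_of_notMem (by simp [dab, dac, dad]),
        Finset.card_insert_of_notMem (by simp [dbc, dbd]),
        Finset.card_insert_of_notMem (by simpa using dcd),
        Finset.card_singleton]
    have h4mem : (4 : ℕ) ∈ {n | ∃ s : Finset V, G.IsIndepSet' s ∧ s.card = n} :=
      ⟨{a, b, c, d}, hI, hcard⟩
    have h43 : (4 : ℕ) ≤ G.indepNum' := le_csSup hbdd h4mem
    rw [hα] at h43
    omega
  have hind3 : ∀ I : Finset V, I ⊆ Finset.univ → G.IsIndepSet' I → I.card ≤ 3 := by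
    intro I _ hI
    by_contra hgt
    push_neg at hgt
    obtain ⟨J, hJI, hJcard⟩ := Finset.exists_subset_card_eq (show 4 ≤ I.card by omega)
    rw [show (4 : ℕ) = 3 + 1 from rfl, Finset.card_eq_succ] at hJcard
    obtain ⟨a, T, haT, rfl, hT3⟩ := hJcard
    rw [Finset.card_eq_three] at hT3
    obtain ⟨x, y, z, hxy, hxz, hyz, rfl⟩ := hT3
    have ha : a ∈ I := hJI (by simp)
    have hx : x ∈ I := hJI (by simp)
    have hy : y ∈ I := hJI (by simp)
    have hz : z ∈ I := hJI (by simp)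
    simp only [Finset.mem_insert, Finset.mem_singleton, not_or] at haT
    obtain ⟨hax, hay, haz⟩ := haT
    exact h4 a x y z hax hay haz hxy hxz hyz
      (hI a ha x hx hax) (hI a ha y hy hay) (hI a ha z hz haz)
      (hI x hx y hy hxy) (hI x hx z hz hxz) (hI y hy z hz hyz)
  obtain ⟨k, B, hBs, hBne, hBdis, hBconn, hBadj, hBcard⟩ :=
    HadwigerC7.main h4 hC7 Finset.univ.card Finset.univ rfl 3 le_rfl hind3
  refine ⟨k, fun i => (↑(B i) : Set V), ?_, ?_, ?_, ?_, ?_⟩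
  · intro i
    exact Finset.coe_nonempty.mpr (hBne i)
  · intro i j hij
    exact Finset.disjoint_coe.mpr (hBdis i j hij)
  · intro i
    exact hBconn i
  · intro i j hij
    obtain ⟨a, ha, b, hb, hadj⟩ := hBadj i j hij
    exact ⟨a, Finset.mem_coe.mpr ha, b, Finset.mem_coe.mpr hb, hadj⟩
  · have hcc : HadwigerC7.cc 3 = 4 := by unfold HadwigerC7.cc; norm_num
    have hn : Fintype.card V ≤ k * 4 := by
      rw [← Finset.card_univ]
      calc Finset.univ.card ≤ k * HadwigerC7.cc 3 := hBcard
        _ = k * 4 := by rw [hcc]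
    rw [div_le_iff₀ (by norm_num : (0 : ℝ) < 4)]
    have : (Fintype.card V : ℝ) ≤ (k : ℝ) * 4 := by exact_mod_cast hn
    linarith
end
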